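/- arXiv:2506.07700 — 4 statements merged into one kernel-verified Lean document; each statement's English description precedes it below -/
import Mathlib

section
/- For every real c with 0 < c < 1 and every real γ > 0, there exists d₀ ∈ ℕ such that the following holds: if G is a d-regular simple graph (on any finite vertex set) with d ≥ d₀, then there exists a subset A of the vertices of G such that for every vertex v of G, c·d − γ·d ≤ |N_G(v) ∩ A| ≤ c·d + γ·d, where N_G(v) denotes the neighbourhood of v in G. -/
open SimpleGraph Finset

set_option linter.unusedSectionVars false
set_option linter.unreachableTactic false
set_option linter.unusedTactic false
set_option maxHeartbeats 1000000

namespace BalancedAux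

variable {V : Type} [Fintype V] [DecidableEq V]

noncomputable def wt (c : ℝ) (ω : V → Bool) : ℝ :=
  ∏ v : V, (if ω v then c else 1 - c)

open scoped Classical in
noncomputable def Pr (c : ℝ) (E : (V → Bool) → Prop) : ℝ :=
  ∑ ω : V → Bool, if E ω then wt c ω else 0

lemma wt_nonneg {c : ℝ} (hc0 : 0 ≤ c) (hc1 : c ≤ 1) (ω : V → Bool) : 0 ≤ wt c ω := by
  refine Finset.prod_nonneg fun v _ => ?_
  by_cases h : ω v <;> simp [h] <;> linarith

lemma sum_prod_eq (g : V → Bool → ℝ) :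
    (∑ ω : V → Bool, ∏ v : V, g v (ω v)) = ∏ v : V, (g v true + g v false) := by
  have h := Finset.prod_univ_sum (fun _ : V => (Finset.univ : Finset Bool)) g
  rw [Fintype.piFinset_univ] at h
  rw [← h]
  refine Finset.prod_congr rfl fun v _ => ?_
  simp [Fintype.sum_bool]

lemma sum_wt {c : ℝ} : (∑ ω : V → Bool, wt c ω) = 1 := by
  have := sum_prod_eq (fun (_ : V) (b : Bool) => if b then c else 1 - c)
  simp only [wt, this]
  simp

lemma Pr_nonneg {c : ℝ} (hc0 : 0 ≤ c) (hc1 : c ≤ 1) (E : (V → Bool) → Prop) : 0 ≤ Pr c E := by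
  classical
  refine Finset.sum_nonneg fun ω _ => ?_
  split
  · exact wt_nonneg hc0 hc1 ω
  · exact le_refl 0

lemma Pr_congr {c : ℝ} {E F : (V → Bool) → Prop} (h : ∀ ω, E ω ↔ F ω) : Pr c E = Pr c F := by
  classical
  refine Finset.sum_congr rfl fun ω _ => ?_
  exact if_congr (h ω) rfl rfl

lemma Pr_true {c : ℝ} : Pr c (fun _ : V → Bool => True) = 1 := by
  classical
  simp only [Pr, if_true]
  exact sum_wt

lemma Pr_mono {c : ℝ} (hc0 : 0 ≤ c) (hc1 : c ≤ 1) {E F : (V → Bool) → Prop}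
    (h : ∀ ω, E ω → F ω) : Pr c E ≤ Pr c F := by
  classical
  refine Finset.sum_le_sum fun ω _ => ?_
  by_cases hE : E ω
  · rw [if_pos hE, if_pos (h ω hE)]
  · rw [if_neg hE]
    split
    · exact wt_nonneg hc0 hc1 ω
    · exact le_refl 0

lemma Pr_le_one {c : ℝ} (hc0 : 0 ≤ c) (hc1 : c ≤ 1) (E : (V → Bool) → Prop) : Pr c E ≤ 1 := by
  have := Pr_mono hc0 hc1 (E := E) (F := fun _ => True) (fun ω _ => trivial)
  rwa [Pr_true] at this

lemma Pr_split {c : ℝ} (E F : (V → Bool) → Prop) :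
    Pr c E = Pr c (fun ω => E ω ∧ F ω) + Pr c (fun ω => E ω ∧ ¬ F ω) := by
  classical
  simp only [Pr, ← Finset.sum_add_distrib]
  refine Finset.sum_congr rfl fun ω _ => ?_
  by_cases hE : E ω <;> by_cases hF : F ω <;> simp [hE, hF]

lemma Pr_union_bound {c : ℝ} (hc0 : 0 ≤ c) (hc1 : c ≤ 1) {α : Type} [DecidableEq α]
    (A : (V → Bool) → Prop) (t : Finset α) (E : α → (V → Bool) → Prop) :
    Pr c (fun ω => A ω ∧ ∃ j ∈ t, E j ω) ≤ ∑ j ∈ t, Pr c (fun ω => A ω ∧ E j ω) := by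
  classical
  simp only [Pr]
  rw [Finset.sum_comm]
  refine Finset.sum_le_sum fun ω _ => ?_
  by_cases h : A ω ∧ ∃ j ∈ t, E j ω
  · rw [if_pos h]
    obtain ⟨hA, j₀, hj₀, hEj₀⟩ := h
    refine le_trans ?_ (Finset.single_le_sum (fun j _ => ?_) hj₀)
    · rw [if_pos ⟨hA, hEj₀⟩]
    · split
      · exact wt_nonneg hc0 hc1 ω
      · exact le_refl 0
  · rw [if_neg h]
    refine Finset.sum_nonneg fun j _ => ?_
    split
    · exact wt_nonneg hc0 hc1 ω
    · exact le_refl 0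



/-- `E` depends only on coordinates in `s`. -/
def Supported (s : Finset V) (E : (V → Bool) → Prop) : Prop :=
  ∀ ω ω' : V → Bool, (∀ v ∈ s, ω v = ω' v) → (E ω ↔ E ω')

lemma Supported.mono {s t : Finset V} {E : (V → Bool) → Prop} (h : Supported s E)
    (hst : s ⊆ t) : Supported t E :=
  fun ω ω' hag => h ω ω' fun v hv => hag v (hst hv)

/-- swap the coordinates outside `s` between the two components -/
def swapE (s : Finset V) : ((V → Bool) × (V → Bool)) ≃ ((V → Bool) × (V → Bool)) where
  toFun x := (fun v => if v ∈ s then x.1 v else x.2 v, fun v => if v ∈ s then x.2 v else x.1 v)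
  invFun x := (fun v => if v ∈ s then x.1 v else x.2 v, fun v => if v ∈ s then x.2 v else x.1 v)
  left_inv x := by
    ext v <;> by_cases h : v ∈ s <;> simp [h]
  right_inv x := by
    ext v <;> by_cases h : v ∈ s <;> simp [h]

lemma indep {c : ℝ} {s t : Finset V} {E F : (V → Bool) → Prop}
    (hE : Supported s E) (hF : Supported t F) (hst : Disjoint s t) :
    Pr c (fun ω => E ω ∧ F ω) = Pr c E * Pr c F := by
  classical
  have h1 : Pr c (fun ω => E ω ∧ F ω) * (∑ β : V → Bool, wt c β)
      = ∑ x : (V → Bool) × (V → Bool),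
          (if E x.1 ∧ F x.1 then wt c x.1 else 0) * wt c x.2 := by
    simp only [Pr]
    rw [Finset.sum_mul_sum, Fintype.sum_prod_type]
    exact Finset.sum_congr rfl fun i _ => Finset.sum_congr rfl fun j _ => by
      by_cases hEi : E i <;> by_cases hFi : F i <;> simp [hEi, hFi]
  have h2 : Pr c E * Pr c F = ∑ x : (V → Bool) × (V → Bool),
      (if E x.1 then wt c x.1 else 0) * (if F x.2 then wt c x.2 else 0) := by
    simp only [Pr]
    rw [Finset.sum_mul_sum, Fintype.sum_prod_type]
    all_goals
      refine Finset.sum_congr rfl fun i _ => Finset.sum_congr rfl fun j _ => ?_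
      by_cases hEi : E i <;> by_cases hFj : F j <;> simp [hEi, hFj]
  have key : (Pr c (fun ω => E ω ∧ F ω)) * (∑ β : V → Bool, wt c β)
      = Pr c E * Pr c F := by
    rw [h1, h2]
    rw [← Equiv.sum_comp (swapE s) (fun x : (V → Bool) × (V → Bool) =>
      (if E x.1 then wt c x.1 else 0) * (if F x.2 then wt c x.2 else 0))]
    refine Finset.sum_congr rfl fun x _ => ?_
    obtain ⟨α, β⟩ := x
    have hEeq : E (fun v => if v ∈ s then α v else β v) ↔ E α := by
      refine hE _ _ fun v hv => by simp [hv]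
    have hFeq : F (fun v => if v ∈ s then β v else α v) ↔ F α := by
      refine hF _ _ fun v hv => ?_
      have hvs : v ∉ s := fun hvs => (Finset.disjoint_left.mp hst) hvs hv
      simp [hvs]
    have hwt : wt c (fun v => if v ∈ s then α v else β v) *
        wt c (fun v => if v ∈ s then β v else α v) = wt c α * wt c β := by
      simp only [wt, ← Finset.prod_mul_distrib]
      refine Finset.prod_congr rfl fun v _ => ?_
      by_cases h : v ∈ s <;> by_cases ha : α v <;> by_cases hb : β v <;> simp [h, ha, hb] <;> ring
    simp only [swapE, Equiv.coe_fn_mk]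
    by_cases hEa : E α <;> by_cases hFa : F α <;>
      simp [hEeq, hFeq, hEa, hFa, hwt]
  rwa [sum_wt, mul_one] at key

/-- centred indicator -/
noncomputable def phi (c : ℝ) (b : Bool) : ℝ := (if b then 1 else 0) - c

lemma Emoment (c : ℝ) (g : V → Bool → ℝ) :
    (∑ ω : V → Bool, wt c ω * ∏ v : V, g v (ω v))
      = ∏ v : V, (c * g v true + (1 - c) * g v false) := by
  have h := sum_prod_eq (fun (v : V) (b : Bool) => (if b then c else 1 - c) * g v b)
  simp only [reduceIte, Bool.false_eq_true, if_false] at h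
  calc (∑ ω : V → Bool, wt c ω * ∏ v : V, g v (ω v))
      = ∑ ω : V → Bool, ∏ v : V, (if ω v then c else 1 - c) * g v (ω v) := by
        refine Finset.sum_congr rfl fun ω _ => ?_
        rw [wt, ← Finset.prod_mul_distrib]
  _ = ∏ v : V, (c * g v true + (1 - c) * g v false) := by rw [h]

noncomputable def eL (c : ℝ) (k : ℕ) : ℝ := c * (1 - c) ^ k + (1 - c) * (-c) ^ k

lemma eL_zero (c : ℝ) : eL c 0 = 1 := by simp [eL]

lemma eL_one (c : ℝ) : eL c 1 = 0 := by simp [eL]; ring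

lemma abs_eL_le_one {c : ℝ} (hc0 : 0 ≤ c) (hc1 : c ≤ 1) (k : ℕ) : |eL c k| ≤ 1 := by
  have h1 : |(1 - c) ^ k| ≤ 1 := by
    rw [abs_pow]; exact pow_le_one₀ (abs_nonneg _) (by rw [abs_of_nonneg (by linarith)]; linarith)
  have h2 : |(-c) ^ k| ≤ 1 := by
    rw [abs_pow]; exact pow_le_one₀ (abs_nonneg _) (by rw [abs_neg, abs_of_nonneg hc0]; linarith)
  calc |eL c k| ≤ |c * (1 - c) ^ k| + |(1 - c) * (-c) ^ k| := abs_add_le _ _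
  _ = c * |(1 - c) ^ k| + (1 - c) * |(-c) ^ k| := by
      rw [abs_mul, abs_mul, abs_of_nonneg hc0, abs_of_nonneg (by linarith : (0:ℝ) ≤ 1 - c)]
  _ ≤ 1 := by nlinarith [abs_nonneg ((1 - c : ℝ) ^ k), abs_nonneg ((-c : ℝ) ^ k)]

lemma tuple_expect (c : ℝ) (p : Fin 6 → V) :
    (∑ ω : V → Bool, wt c ω * ∏ i : Fin 6, phi c (ω (p i)))
      = ∏ v : V, eL c ((univ.filter fun i => p i = v).card) := by
  have hprod : ∀ ω : V → Bool, (∏ i : Fin 6, phi c (ω (p i)))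
      = ∏ v : V, (phi c (ω v)) ^ ((univ.filter fun i => p i = v).card) := by
    intro ω
    rw [← Finset.prod_fiberwise_of_maps_to (fun i _ => Finset.mem_univ (p i))
      (fun i => phi c (ω (p i)))]
    refine Finset.prod_congr rfl fun v _ => ?_
    rw [Finset.prod_congr rfl (fun i hi => ?_), Finset.prod_const]
    · show phi c (ω (p i)) = phi c (ω v)
      rw [(Finset.mem_filter.mp hi).2]
  simp only [hprod]
  rw [Emoment c (fun v b => phi c b ^ ((univ.filter fun i => p i = v).card))]
  refine Finset.prod_congr rfl fun v _ => ?_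
  simp [phi, eL]

lemma pad3 (s t : Finset V) (hs : s.Nonempty) (hts : t ⊆ s) (h : t.card ≤ 3) :
    ∃ x ∈ s, ∃ y ∈ s, ∃ z ∈ s, t ⊆ {x, y, z} := by
  obtain ⟨a, ha⟩ := hs
  interval_cases h' : t.card
  · obtain rfl := Finset.card_eq_zero.mp h'
    exact ⟨a, ha, a, ha, a, ha, by simp⟩
  · obtain ⟨x, rfl⟩ := Finset.card_eq_one.mp h'
    exact ⟨x, hts (Finset.mem_singleton_self x), a, ha, a, ha, by intro u hu; simp at hu; simp [hu]⟩
  · obtain ⟨x, y, hxy, rfl⟩ := Finset.card_eq_two.mp h'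
    refine ⟨x, hts (by simp), y, hts (by simp), a, ha, ?_⟩
    intro u hu; simp at hu; rcases hu with h | h <;> simp [h]
  · obtain ⟨x, y, z, _, _, _, rfl⟩ := Finset.card_eq_three.mp h'
    exact ⟨x, hts (by simp), y, hts (by simp), z, hts (by simp), le_refl _⟩

lemma count_T (s : Finset V) (hs : s.Nonempty) :
    ((Fintype.piFinset fun _ : Fin 6 => s).filter
      (fun p => ∀ v : V, ((univ.filter fun i => p i = v).card ≠ 1))).card
      ≤ 729 * s.card ^ 3 := by
  set T := (Fintype.piFinset fun _ : Fin 6 => s).filter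
      (fun p => ∀ v : V, ((univ.filter fun i => p i = v).card ≠ 1)) with hT
  have hsub : T ⊆ (s ×ˢ s ×ˢ s).biUnion
      (fun q => Fintype.piFinset fun _ : Fin 6 => ({q.1, q.2.1, q.2.2} : Finset V)) := by
    intro p hp
    obtain ⟨hpP, hm⟩ := Finset.mem_filter.mp hp
    have hmem : ∀ i, p i ∈ s := fun i => Fintype.mem_piFinset.mp hpP i
    set im := univ.image p with him
    have him_sub : im ⊆ s := by
      intro v hv; obtain ⟨i, _, rfl⟩ := Finset.mem_image.mp hv; exact hmem i
    have hcard6 : (univ : Finset (Fin 6)).card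
        = ∑ v ∈ im, (univ.filter fun i => p i = v).card :=
      Finset.card_eq_sum_card_fiberwise fun i _ => Finset.mem_image_of_mem p (Finset.mem_univ i)
    have hge2 : ∀ v ∈ im, 2 ≤ (univ.filter fun i => p i = v).card := by
      intro v hv
      obtain ⟨i, _, rfl⟩ := Finset.mem_image.mp hv
      have h1 : 1 ≤ (univ.filter fun j => p j = p i).card := by
        rw [Nat.succ_le_iff, Finset.card_pos]
        exact ⟨i, Finset.mem_filter.mpr ⟨Finset.mem_univ i, rfl⟩⟩
      rcases Nat.lt_or_ge ((univ.filter fun j => p j = p i).card) 2 with h | h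
      · exact absurd (by omega : (univ.filter fun j => p j = p i).card = 1) (hm (p i))
      · exact h
    have hcard : im.card ≤ 3 := by
      have h2 : ∑ _v ∈ im, 2 ≤ ∑ v ∈ im, (univ.filter fun i => p i = v).card :=
        Finset.sum_le_sum hge2
      rw [Finset.sum_const, smul_eq_mul] at h2
      have h6 : (univ : Finset (Fin 6)).card = 6 := by simp
      omega
    obtain ⟨x, hx, y, hy, z, hz, hxyz⟩ := pad3 s im hs him_sub hcard
    refine Finset.mem_biUnion.mpr ⟨(x, y, z), ?_, ?_⟩
    · exact Finset.mem_product.mpr ⟨hx, Finset.mem_product.mpr ⟨hy, hz⟩⟩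
    · exact Fintype.mem_piFinset.mpr fun i =>
        hxyz (Finset.mem_image_of_mem p (Finset.mem_univ i))
  calc T.card ≤ _ := Finset.card_le_card hsub
  _ ≤ ∑ q ∈ s ×ˢ s ×ˢ s,
      (Fintype.piFinset fun _ : Fin 6 => ({q.1, q.2.1, q.2.2} : Finset V)).card :=
      Finset.card_biUnion_le
  _ ≤ ∑ q ∈ s ×ˢ s ×ˢ s, 729 := by
      refine Finset.sum_le_sum fun q _ => ?_
      rw [Fintype.card_piFinset]
      have h3 : ({q.1, q.2.1, q.2.2} : Finset V).card ≤ 3 := by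
        apply le_trans (Finset.card_insert_le _ _)
        have := Finset.card_insert_le q.2.1 ({q.2.2} : Finset V)
        simp at this ⊢
        omega
      calc (∏ _i : Fin 6, ({q.1, q.2.1, q.2.2} : Finset V).card)
          ≤ ∏ _i : Fin 6, 3 := Finset.prod_le_prod (fun _ _ => Nat.zero_le _) (fun _ _ => h3)
      _ = 729 := by simp
  _ = 729 * s.card ^ 3 := by
      rw [Finset.sum_const, Finset.card_product, Finset.card_product]
      ring

lemma sixth_moment {c : ℝ} (hc0 : 0 ≤ c) (hc1 : c ≤ 1) (s : Finset V) (hs : s.Nonempty) :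
    (∑ ω : V → Bool, wt c ω * (∑ u ∈ s, phi c (ω u)) ^ 6) ≤ 729 * (s.card : ℝ) ^ 3 := by
  classical
  have hexp : ∀ ω : V → Bool, (∑ u ∈ s, phi c (ω u)) ^ 6
      = ∑ p ∈ Fintype.piFinset (fun _ : Fin 6 => s), ∏ i : Fin 6, phi c (ω (p i)) := by
    intro ω
    rw [← Finset.prod_univ_sum (fun _ : Fin 6 => s) (fun _ u => phi c (ω u))]
    rw [Finset.prod_const]
    simp
  calc (∑ ω : V → Bool, wt c ω * (∑ u ∈ s, phi c (ω u)) ^ 6)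
      = ∑ p ∈ Fintype.piFinset (fun _ : Fin 6 => s),
          ∑ ω : V → Bool, wt c ω * ∏ i : Fin 6, phi c (ω (p i)) := by
        simp only [hexp, Finset.mul_sum]
        rw [Finset.sum_comm]
  _ = ∑ p ∈ Fintype.piFinset (fun _ : Fin 6 => s),
        ∏ v : V, eL c ((univ.filter fun i => p i = v).card) := by
        exact Finset.sum_congr rfl fun p _ => tuple_expect c p
  _ = ∑ p ∈ (Fintype.piFinset fun _ : Fin 6 => s).filter
        (fun p => ∀ v : V, ((univ.filter fun i => p i = v).card ≠ 1)),
        ∏ v : V, eL c ((univ.filter fun i => p i = v).card) := by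
        rw [Finset.sum_filter_of_ne]
        intro p _ hne v
        by_contra hv1
        exact hne (Finset.prod_eq_zero (Finset.mem_univ v) (by rw [hv1]; exact eL_one c))
  _ ≤ ∑ _p ∈ (Fintype.piFinset fun _ : Fin 6 => s).filter
        (fun p => ∀ v : V, ((univ.filter fun i => p i = v).card ≠ 1)), (1 : ℝ) := by
        refine Finset.sum_le_sum fun p _ => ?_
        calc (∏ v : V, eL c ((univ.filter fun i => p i = v).card))
            ≤ |∏ v : V, eL c ((univ.filter fun i => p i = v).card)| := le_abs_self _
        _ = ∏ v : V, |eL c ((univ.filter fun i => p i = v).card)| := Finset.abs_prod _ _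
        _ ≤ 1 := Finset.prod_le_one (fun v _ => abs_nonneg _)
              (fun v _ => abs_eL_le_one hc0 hc1 _)
  _ ≤ 729 * (s.card : ℝ) ^ 3 := by
        rw [Finset.sum_const, nsmul_eq_mul, mul_one]
        have := count_T s hs
        calc (((Fintype.piFinset fun _ : Fin 6 => s).filter
            (fun p => ∀ v : V, ((univ.filter fun i => p i = v).card ≠ 1))).card : ℝ)
            ≤ ((729 * s.card ^ 3 : ℕ) : ℝ) := by exact_mod_cast this
        _ = 729 * (s.card : ℝ) ^ 3 := by push_cast; ring

def badE (c γ : ℝ) (s : Finset V) (ω : V → Bool) : Prop :=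
  ¬(c * s.card - γ * s.card ≤ ((s.filter fun u => ω u = true).card : ℝ) ∧
    ((s.filter fun u => ω u = true).card : ℝ) ≤ c * s.card + γ * s.card)


lemma sum_phi (c : ℝ) (s : Finset V) (ω : V → Bool) :
    (∑ u ∈ s, phi c (ω u)) = ((s.filter fun u => ω u = true).card : ℝ) - c * s.card := by
  simp only [phi]
  rw [Finset.sum_sub_distrib, Finset.sum_boole, Finset.sum_const, nsmul_eq_mul, mul_comm]

lemma badE_prob {c γ : ℝ} (hc0 : 0 ≤ c) (hc1 : c ≤ 1) (hγ : 0 < γ)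
    (s : Finset V) (hs : s.Nonempty) :
    Pr c (badE c γ s) * (γ * s.card) ^ 6 ≤ 729 * (s.card : ℝ) ^ 3 := by
  classical
  have hd0 : (0:ℝ) ≤ γ * s.card := by positivity
  calc Pr c (badE c γ s) * (γ * s.card) ^ 6
      = ∑ ω : V → Bool, (if badE c γ s ω then wt c ω else 0) * (γ * s.card) ^ 6 := by
        rw [Pr, Finset.sum_mul]
  _ ≤ ∑ ω : V → Bool, wt c ω * (∑ u ∈ s, phi c (ω u)) ^ 6 := by
      refine Finset.sum_le_sum fun ω _ => ?_
      by_cases hb : badE c γ s ω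
      · rw [if_pos hb]
        have hX : γ * s.card ≤ |∑ u ∈ s, phi c (ω u)| := by
          rw [sum_phi]
          rw [badE, not_and_or] at hb
          rcases hb with h | h
          · push_neg at h
            rw [abs_of_nonpos (by linarith)]
            linarith
          · push_neg at h
            rw [abs_of_nonneg (by linarith)]
            linarith
        have h6 : (γ * s.card) ^ 6 ≤ (∑ u ∈ s, phi c (ω u)) ^ 6 := by
          have := pow_le_pow_left₀ hd0 hX 6
          rwa [← abs_pow, abs_of_nonneg (by positivity)] at this
        exact mul_le_mul_of_nonneg_left h6 (wt_nonneg hc0 hc1 ω)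
      · rw [if_neg hb, zero_mul]
        exact mul_nonneg (wt_nonneg hc0 hc1 ω) (by positivity)
  _ ≤ 729 * (s.card : ℝ) ^ 3 := sixth_moment hc0 hc1 s hs

lemma supported_badE (c γ : ℝ) (s : Finset V) : Supported s (badE c γ s) := by
  intro ω ω' hag
  have : (s.filter fun u => ω u = true) = (s.filter fun u => ω' u = true) := by
    refine Finset.filter_congr fun u hu => by rw [hag u hu]
  rw [badE, badE, this]

lemma supported_forall {α : Type} [DecidableEq α] (t : Finset α) (N : α → Finset V)
    (E : α → (V → Bool) → Prop) (h : ∀ j ∈ t, Supported (N j) (E j)) :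
    Supported (t.biUnion N) (fun ω => ∀ j ∈ t, ¬ E j ω) := by
  intro ω ω' hag
  have key : ∀ j ∈ t, (E j ω ↔ E j ω') := by
    intro j hj
    exact h j hj ω ω' fun v hv => hag v (Finset.mem_biUnion.mpr ⟨j, hj, hv⟩)
  constructor
  · intro hall j hj hEj; exact hall j hj ((key j hj).mpr hEj)
  · intro hall j hj hEj; exact hall j hj ((key j hj).mp hEj)

theorem LLL {c : ℝ} (hc0 : 0 ≤ c) (hc1 : c ≤ 1)
    {I : Type} [Fintype I] [DecidableEq I]
    (E : I → (V → Bool) → Prop) (Γ : I → Finset I) (p : ℝ)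
    (hp0 : 0 ≤ p) (hp1 : 2 * p < 1)
    (hp : ∀ i, Pr c (E i) ≤ p)
    (hpD : ∀ i, 2 * p * (Γ i).card ≤ 1 / 2)
    (hind : ∀ i (S : Finset I), (∀ j ∈ S, j ≠ i ∧ j ∉ Γ i) →
      Pr c (fun ω => E i ω ∧ ∀ j ∈ S, ¬ E j ω)
        = Pr c (E i) * Pr c (fun ω => ∀ j ∈ S, ¬ E j ω)) :
    ∃ ω : V → Bool, ∀ i, ¬ E i ω := by
  classical
  have main : ∀ n (S : Finset I), S.card ≤ n →
      (0 < Pr c (fun ω => ∀ j ∈ S, ¬ E j ω)) ∧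
      (∀ i, i ∉ S → Pr c (fun ω => E i ω ∧ ∀ j ∈ S, ¬ E j ω)
          ≤ 2 * p * Pr c (fun ω => ∀ j ∈ S, ¬ E j ω)) := by
    intro n
    induction n with
    | zero =>
      intro S hS
      have hSe : S = ∅ := Finset.card_eq_zero.mp (Nat.le_zero.mp hS)
      subst hSe
      have hQ : Pr c (fun ω : V → Bool => ∀ j ∈ (∅ : Finset I), ¬ E j ω) = 1 := by
        rw [Pr_congr (F := fun _ => True) (fun ω => by simp)]
        exact Pr_true
      constructor
      · rw [hQ]; norm_num
      · intro i _
        rw [hQ, mul_one]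
        calc Pr c (fun ω => E i ω ∧ ∀ j ∈ (∅ : Finset I), ¬ E j ω)
            = Pr c (E i) := Pr_congr (fun ω => by simp)
        _ ≤ p := hp i
        _ ≤ 2 * p := by linarith
    | succ n ih =>
      intro S hS
      rcases Nat.lt_or_ge S.card (n + 1) with hlt | hge
      · exact ih S (Nat.lt_succ_iff.mp hlt)
      have hcard : S.card = n + 1 := le_antisymm hS hge
      -- Positivity part
      have hpos : 0 < Pr c (fun ω => ∀ j ∈ S, ¬ E j ω) := by
        have hne : S.Nonempty := Finset.card_pos.mp (by omega)
        obtain ⟨j, hj⟩ := hne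
        set S' := S.erase j with hS'
        have hcard' : S'.card ≤ n := by
          rw [hS', Finset.card_erase_of_mem hj]; omega
        obtain ⟨hB', hA'⟩ := ih S' hcard'
        have hsplit := Pr_split (V := V) (c := c)
          (fun ω => ∀ k ∈ S', ¬ E k ω) (E j)
        have heq : Pr c (fun ω => (∀ k ∈ S', ¬ E k ω) ∧ ¬ E j ω)
            = Pr c (fun ω => ∀ k ∈ S, ¬ E k ω) := by
          refine Pr_congr fun ω => ?_
          constructor
          · rintro ⟨h1, h2⟩ k hk
            rcases eq_or_ne k j with rfl | hkj
            · exact h2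
            · exact h1 k (Finset.mem_erase.mpr ⟨hkj, hk⟩)
          · intro h
            exact ⟨fun k hk => h k (Finset.mem_of_mem_erase hk), h j hj⟩
        have hand : Pr c (fun ω => (∀ k ∈ S', ¬ E k ω) ∧ E j ω)
            = Pr c (fun ω => E j ω ∧ ∀ k ∈ S', ¬ E k ω) :=
          Pr_congr fun ω => and_comm
        have hA'j := hA' j (Finset.notMem_erase j S)
        have : Pr c (fun ω => ∀ k ∈ S, ¬ E k ω)
            ≥ (1 - 2 * p) * Pr c (fun ω => ∀ k ∈ S', ¬ E k ω) := by
          rw [← heq]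
          have := hsplit
          nlinarith [hA'j, hand, hsplit]
        nlinarith [hB']
      refine ⟨hpos, ?_⟩
      intro i hi
      set S₁ := S ∩ Γ i with hS₁def
      set S₂ := S \ Γ i with hS₂def
      by_cases hS1 : S₁ = ∅
      · -- no dependent indices in S
        have hScond : ∀ j ∈ S, j ≠ i ∧ j ∉ Γ i := by
          intro j hj
          refine ⟨fun h => hi (h ▸ hj), fun hΓ => ?_⟩
          have : j ∈ S₁ := Finset.mem_inter.mpr ⟨hj, hΓ⟩
          simp [hS1] at this
        rw [hind i S hScond]
        have h1 : Pr c (E i) ≤ p := hp i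
        have h2 : 0 ≤ Pr c (fun ω => ∀ j ∈ S, ¬ E j ω) := le_of_lt hpos
        nlinarith
      · -- S₁ nonempty
        have hS₂sub : S₂ ⊆ S := Finset.sdiff_subset
        have hS₂lt : S₂.card ≤ n := by
          have hssub : S₂ ⊂ S := by
            obtain ⟨j, hj⟩ := Finset.nonempty_iff_ne_empty.mpr hS1
            refine Finset.ssubset_iff_of_subset hS₂sub |>.mpr ?_
            obtain ⟨hjS, hjΓ⟩ := Finset.mem_inter.mp hj
            exact ⟨j, hjS, fun h => (Finset.mem_sdiff.mp h).2 hjΓ⟩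
          have := Finset.card_lt_card hssub
          omega
        obtain ⟨hB₂, hA₂⟩ := ih S₂ hS₂lt
        have step1 : Pr c (fun ω => E i ω ∧ ∀ j ∈ S, ¬ E j ω)
            ≤ Pr c (fun ω => E i ω ∧ ∀ j ∈ S₂, ¬ E j ω) := by
          refine Pr_mono hc0 hc1 fun ω h => ⟨h.1, fun j hj => h.2 j (hS₂sub hj)⟩
        have step2 : Pr c (fun ω => E i ω ∧ ∀ j ∈ S₂, ¬ E j ω)
            = Pr c (E i) * Pr c (fun ω => ∀ j ∈ S₂, ¬ E j ω) := by
          refine hind i S₂ fun j hj => ?_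
          obtain ⟨hjS, hjΓ⟩ := Finset.mem_sdiff.mp hj
          exact ⟨fun h => hi (h ▸ hjS), hjΓ⟩
        -- step4 : Q₂ ≤ 2 Q S
        have hsplit := Pr_split (V := V) (c := c)
          (fun ω => ∀ j ∈ S₂, ¬ E j ω) (fun ω => ∀ j ∈ S₁, ¬ E j ω)
        have heqS : Pr c (fun ω => (∀ j ∈ S₂, ¬ E j ω) ∧ (∀ j ∈ S₁, ¬ E j ω))
            = Pr c (fun ω => ∀ j ∈ S, ¬ E j ω) := by
          refine Pr_congr fun ω => ?_
          constructor
          · rintro ⟨h2, h1⟩ j hj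
            by_cases hΓ : j ∈ Γ i
            · exact h1 j (Finset.mem_inter.mpr ⟨hj, hΓ⟩)
            · exact h2 j (Finset.mem_sdiff.mpr ⟨hj, hΓ⟩)
          · intro h
            exact ⟨fun j hj => h j (Finset.mem_sdiff.mp hj).1,
              fun j hj => h j (Finset.mem_inter.mp hj).1⟩
        have hub : Pr c (fun ω => (∀ j ∈ S₂, ¬ E j ω) ∧ ¬ (∀ j ∈ S₁, ¬ E j ω))
            ≤ (1 / 2) * Pr c (fun ω => ∀ j ∈ S₂, ¬ E j ω) := by
          have h1 : Pr c (fun ω => (∀ j ∈ S₂, ¬ E j ω) ∧ ¬ (∀ j ∈ S₁, ¬ E j ω))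
              = Pr c (fun ω => (∀ j ∈ S₂, ¬ E j ω) ∧ ∃ j ∈ S₁, E j ω) := by
            refine Pr_congr fun ω => ?_
            constructor
            · rintro ⟨h2, h1⟩
              push_neg at h1
              exact ⟨h2, h1⟩
            · rintro ⟨h2, j, hj, hEj⟩
              exact ⟨h2, fun hall => hall j hj hEj⟩
          rw [h1]
          calc Pr c (fun ω => (∀ j ∈ S₂, ¬ E j ω) ∧ ∃ j ∈ S₁, E j ω)
              ≤ ∑ j ∈ S₁, Pr c (fun ω => (∀ k ∈ S₂, ¬ E k ω) ∧ E j ω) :=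
              Pr_union_bound hc0 hc1 _ S₁ E
          _ ≤ ∑ j ∈ S₁, 2 * p * Pr c (fun ω => ∀ k ∈ S₂, ¬ E k ω) := by
              refine Finset.sum_le_sum fun j hj => ?_
              have hjnot : j ∉ S₂ := by
                obtain ⟨hjS, hjΓ⟩ := Finset.mem_inter.mp hj
                exact fun h => (Finset.mem_sdiff.mp h).2 hjΓ
              have := hA₂ j hjnot
              calc Pr c (fun ω => (∀ k ∈ S₂, ¬ E k ω) ∧ E j ω)
                  = Pr c (fun ω => E j ω ∧ ∀ k ∈ S₂, ¬ E k ω) :=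
                  Pr_congr fun ω => and_comm
              _ ≤ 2 * p * Pr c (fun ω => ∀ k ∈ S₂, ¬ E k ω) := this
          _ = S₁.card * (2 * p * Pr c (fun ω => ∀ k ∈ S₂, ¬ E k ω)) := by
              rw [Finset.sum_const, nsmul_eq_mul]
          _ ≤ (1 / 2) * Pr c (fun ω => ∀ j ∈ S₂, ¬ E j ω) := by
              have hcardle : (S₁.card : ℝ) ≤ (Γ i).card := by
                exact_mod_cast Finset.card_le_card (Finset.inter_subset_right)
              have hD := hpD i
              have hQ2 := le_of_lt hB₂
              have : (S₁.card : ℝ) * (2 * p) ≤ 1 / 2 := by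
                calc (S₁.card : ℝ) * (2 * p) ≤ ((Γ i).card : ℝ) * (2 * p) := by
                      exact mul_le_mul_of_nonneg_right hcardle (by linarith)
                _ = 2 * p * (Γ i).card := by ring
                _ ≤ 1 / 2 := hD
              nlinarith
        have step4 : Pr c (fun ω => ∀ j ∈ S₂, ¬ E j ω)
            ≤ 2 * Pr c (fun ω => ∀ j ∈ S, ¬ E j ω) := by
          nlinarith [hsplit, heqS, hub]
        calc Pr c (fun ω => E i ω ∧ ∀ j ∈ S, ¬ E j ω)
            ≤ Pr c (E i) * Pr c (fun ω => ∀ j ∈ S₂, ¬ E j ω) := by rw [← step2]; exact step1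
        _ ≤ p * (2 * Pr c (fun ω => ∀ j ∈ S, ¬ E j ω)) := by
            have h1 := hp i
            have h2 := Pr_nonneg (V := V) hc0 hc1 (E i)
            have h3 := le_of_lt hB₂
            have h4 := Pr_nonneg (V := V) hc0 hc1 (fun ω => ∀ j ∈ S, ¬ E j ω)
            nlinarith [step4]
        _ = 2 * p * Pr c (fun ω => ∀ j ∈ S, ¬ E j ω) := by ring
  have hfinal := (main (Finset.univ.card) Finset.univ (le_refl _)).1
  by_contra hno
  push_neg at hno
  have hzero : Pr c (fun ω : V → Bool => ∀ j ∈ (Finset.univ : Finset I), ¬ E j ω) = 0 := by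
    rw [Pr]
    refine Finset.sum_eq_zero fun ω _ => ?_
    rw [if_neg]
    intro h
    obtain ⟨i, hEi⟩ := hno ω
    exact h i (Finset.mem_univ i) hEi
  rw [hzero] at hfinal
  exact lt_irrefl 0 hfinal
end BalancedAux

open BalancedAux in
/-- For every real `c` with `0 < c < 1` and every `γ > 0`, there exists `d₀ ∈ ℕ` such that
every `d`-regular finite simple graph with `d ≥ d₀` has a vertex subset `A` with
`c·d − γ·d ≤ |N_G(v) ∩ A| ≤ c·d + γ·d` for every vertex `v`. -/
theorem exists_balanced_subset (c γ : ℝ) (hc0 : 0 < c) (hc1 : c < 1) (hγ : 0 < γ) :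
    ∃ d₀ : ℕ, ∀ (V : Type) [Fintype V] [DecidableEq V] (G : SimpleGraph V)
      [DecidableRel G.Adj] (d : ℕ), d₀ ≤ d → G.IsRegularOfDegree d →
      ∃ A : Finset V, ∀ v : V,
        c * d - γ * d ≤ ((G.neighborFinset v ∩ A).card : ℝ) ∧
        ((G.neighborFinset v ∩ A).card : ℝ) ≤ c * d + γ * d := by
  classical
  refine ⟨⌈2916 / γ ^ 6⌉₊ + 1, ?_⟩
  intro V _ _ G _ d hd hreg
  have hc0' : (0:ℝ) ≤ c := le_of_lt hc0
  have hc1' : c ≤ 1 := le_of_lt hc1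
  have hd1 : 1 ≤ d := le_trans (Nat.le_add_left 1 _) hd
  have hdR : (1:ℝ) ≤ (d:ℝ) := by exact_mod_cast hd1
  have hdpos : (0:ℝ) < d := by linarith
  have hγd : (2916 / γ ^ 6 : ℝ) ≤ d := by
    calc (2916 / γ ^ 6 : ℝ) ≤ (⌈2916 / γ ^ 6⌉₊ : ℝ) := Nat.le_ceil _
    _ ≤ (d : ℝ) := by exact_mod_cast le_trans (Nat.le_succ _) hd
  have hγ6pos : (0:ℝ) < γ ^ 6 := by positivity
  have hkey : (2916 : ℝ) ≤ γ ^ 6 * d := by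
    rw [div_le_iff₀ hγ6pos] at hγd
    linarith [hγd]
  -- setup
  set N : V → Finset V := fun v => G.neighborFinset v with hN
  have hNcard : ∀ v, (N v).card = d := fun v => by
    rw [hN]; rw [G.card_neighborFinset_eq_degree]; exact hreg v
  set p : ℝ := 729 * (d:ℝ) ^ 3 / (γ * d) ^ 6 with hpdef
  have hγdpos : (0:ℝ) < (γ * d) ^ 6 := by positivity
  have hp0 : 0 ≤ p := by positivity
  have hhalf : 2 * p * ((d:ℝ) * d) ≤ 1 / 2 := by
    have hne : ((γ * (d:ℝ)) ^ 6) ≠ 0 := ne_of_gt hγdpos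
    have heq : 2 * p * ((d:ℝ) * d) = 1458 * (d:ℝ) ^ 5 / (γ * (d:ℝ)) ^ 6 := by
      rw [hpdef]; field_simp; ring
    rw [heq, div_le_iff₀ hγdpos]
    have h6 : (γ * (d:ℝ)) ^ 6 = (γ ^ 6 * d) * (d:ℝ) ^ 5 := by ring
    have hd5 : (0:ℝ) ≤ (d:ℝ) ^ 5 := by positivity
    nlinarith [hkey, hd5]
  have hp1 : 2 * p < 1 := by
    have hdd : (1:ℝ) ≤ (d:ℝ) * d := by nlinarith
    nlinarith
  set Γ : V → Finset V := fun v => ((N v).biUnion N).erase v with hΓ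
  have hΓcard : ∀ v, ((Γ v).card : ℝ) ≤ (d:ℝ) * d := by
    intro v
    have h1 : (Γ v).card ≤ ((N v).biUnion N).card :=
      Finset.card_le_card (Finset.erase_subset _ _)
    have h2 : ((N v).biUnion N).card ≤ ∑ x ∈ N v, (N x).card := Finset.card_biUnion_le
    have h3 : ∑ x ∈ N v, (N x).card = d * d := by
      rw [Finset.sum_congr rfl (fun x _ => hNcard x), Finset.sum_const, smul_eq_mul, hNcard v]
    have : (Γ v).card ≤ d * d := by omega
    exact_mod_cast this
  -- the events
  set E : V → (V → Bool) → Prop := fun v => badE c γ (N v) with hE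
  have hNnonempty : ∀ v : V, (N v).Nonempty := fun v =>
    Finset.card_pos.mp (by rw [hNcard v]; omega)
  have hprob : ∀ v, Pr c (E v) ≤ p := by
    intro v
    have hb := badE_prob (c := c) (γ := γ) hc0' hc1' hγ (N v) (hNnonempty v)
    rw [hNcard v] at hb
    rw [hpdef, le_div_iff₀ hγdpos]
    exact hb
  have hpD : ∀ v, 2 * p * ((Γ v).card : ℝ) ≤ 1 / 2 := by
    intro v
    calc 2 * p * ((Γ v).card : ℝ) ≤ 2 * p * ((d:ℝ) * d) := by
          have := hΓcard v
          nlinarith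
    _ ≤ 1 / 2 := hhalf
  have hind : ∀ v (S : Finset V), (∀ j ∈ S, j ≠ v ∧ j ∉ Γ v) →
      Pr c (fun ω => E v ω ∧ ∀ j ∈ S, ¬ E j ω)
        = Pr c (E v) * Pr c (fun ω => ∀ j ∈ S, ¬ E j ω) := by
    intro v S hS
    refine indep (s := N v) (t := S.biUnion N) ?_ ?_ ?_
    · exact supported_badE c γ (N v)
    · exact supported_forall S N E fun j _ => supported_badE c γ (N j)
    · rw [Finset.disjoint_left]
      intro x hxNv hxB
      obtain ⟨j, hjS, hxNj⟩ := Finset.mem_biUnion.mp hxB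
      obtain ⟨hjv, hjΓ⟩ := hS j hjS
      refine hjΓ ?_
      rw [hΓ]
      refine Finset.mem_erase.mpr ⟨hjv, Finset.mem_biUnion.mpr ⟨x, hxNv, ?_⟩⟩
      rw [hN] at hxNj ⊢
      rw [SimpleGraph.mem_neighborFinset] at hxNj ⊢
      exact hxNj.symm
  obtain ⟨ω, hω⟩ := LLL hc0' hc1' E Γ p hp0 hp1 hprob hpD hind
  refine ⟨Finset.univ.filter (fun v => ω v = true), ?_⟩
  intro v
  have hbad := hω v
  rw [hE] at hbad
  simp only [badE, not_not] at hbad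
  have hinter : G.neighborFinset v ∩ Finset.univ.filter (fun u => ω u = true)
      = (N v).filter (fun u => ω u = true) := by
    rw [hN]
    ext u
    simp [Finset.mem_inter, Finset.mem_filter]
  rw [hinter]
  rw [hNcard v] at hbad
  exact hbad
end

section
/- Let G be an (n, d, λ)-graph and let B be a subset of its vertices with |B| = b ≥ 2. Let m denote the number of edges of the induced subgraph G[B] and set p = m / (b choose 2). Then |p − d/n| ≤ (λ + 1)/(b − 1). -/
open SimpleGraph

/-- The adjacency matrix of a simple graph over `ℝ` is Hermitian. -/
theorem adjMatrix_isHermitian {n : ℕ} (G : SimpleGraph (Fin n)) [DecidableRel G.Adj] :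
    (G.adjMatrix ℝ).IsHermitian :=
  Matrix.IsHermitian.ext fun i j => by
    simp [SimpleGraph.adjMatrix_apply, SimpleGraph.adj_comm]

/-- The eigenvalues of the adjacency matrix of `G`. -/
noncomputable def adjEigenvalues {n : ℕ} (G : SimpleGraph (Fin n)) [DecidableRel G.Adj] :
    Fin n → ℝ :=
  (adjMatrix_isHermitian G).eigenvalues

/-- `G` is an `(n, d, λ)`-graph: a `d`-regular graph on `n` vertices all of whose
eigenvalues, except the largest one, are at most `lam` in absolute value. -/
def IsNDLGraph {n : ℕ} (G : SimpleGraph (Fin n)) [DecidableRel G.Adj] (d : ℕ) (lam : ℝ) : Prop :=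
  G.IsRegularOfDegree d ∧
  ∃ i₀ : Fin n, ∀ i : Fin n, i ≠ i₀ → |adjEigenvalues G i| ≤ lam

section Aux

open Finset Matrix
open scoped RealInnerProductSpace

/-- Spectral radius bound for regular graphs. -/
lemma abs_adjEigenvalue_le {n d : ℕ} (G : SimpleGraph (Fin n)) [DecidableRel G.Adj]
    (hreg : G.IsRegularOfDegree d) (i : Fin n) : |adjEigenvalues G i| ≤ d := by
  have hA := adjMatrix_isHermitian G
  set v := hA.eigenvectorBasis i with hv
  set w : Fin n → ℝ := fun j => v j with hw
  have hmul : (G.adjMatrix ℝ) *ᵥ w = adjEigenvalues G i • w := hA.mulVec_eigenvectorBasis i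
  have hv0 : w ≠ (0 : Fin n → ℝ) := by
    intro h
    have h1 := hA.eigenvectorBasis.orthonormal.1 i
    have hvz : v = 0 := by
      ext k
      exact congrFun h k
    rw [← hv, hvz] at h1
    simp at h1
  haveI : Nonempty (Fin n) := ⟨i⟩
  obtain ⟨k, -, hk⟩ := Finset.exists_max_image Finset.univ (fun j => |w j|) ⟨i, Finset.mem_univ i⟩
  have hkpos : 0 < |w k| := by
    rcases lt_or_eq_of_le (abs_nonneg (v k)) with h | h
    · exact h
    · exfalso; apply hv0; funext j
      have h2 := hk j (Finset.mem_univ j)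
      rw [← h] at h2
      have h3 : |v j| = 0 := le_antisymm h2 (abs_nonneg _)
      exact abs_eq_zero.mp h3
  have hrow : ∑ j, (G.adjMatrix ℝ) k j = d := by
    have := SimpleGraph.adjMatrix_mulVec_const_apply_of_regular (α := ℝ) (a := 1) hreg (v := k)
    simpa [Matrix.mulVec, dotProduct] using this
  have hentry : ∀ a b : Fin n, 0 ≤ (G.adjMatrix ℝ) a b := by
    intro a b; rw [SimpleGraph.adjMatrix_apply]; positivity
  have key : |adjEigenvalues G i| * |v k| ≤ (d : ℝ) * |v k| := by
    have h1 : |adjEigenvalues G i| * |v k| = |((G.adjMatrix ℝ) *ᵥ w) k| := by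
      rw [hmul]; simp [abs_mul, hw]
    rw [h1]
    calc |((G.adjMatrix ℝ) *ᵥ w) k| ≤ ∑ j, (G.adjMatrix ℝ) k j * |v j| := by
          rw [Matrix.mulVec, dotProduct]
          refine (Finset.abs_sum_le_sum_abs _ _).trans ?_
          refine Finset.sum_le_sum fun j _ => ?_
          rw [abs_mul, abs_of_nonneg (hentry k j)]
      _ ≤ ∑ j, (G.adjMatrix ℝ) k j * |v k| := by
          refine Finset.sum_le_sum fun j _ => ?_
          exact mul_le_mul_of_nonneg_left (hk j (Finset.mem_univ j)) (hentry k j)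
      _ = (d : ℝ) * |v k| := by rw [← Finset.sum_mul, hrow]
  exact le_of_mul_le_mul_right key hkpos


lemma quadform_bound {n d : ℕ} {lam : ℝ} (G : SimpleGraph (Fin n)) [DecidableRel G.Adj]
    (hreg : G.IsRegularOfDegree d) (i₀ : Fin n)
    (hlam : ∀ i : Fin n, i ≠ i₀ → |adjEigenvalues G i| ≤ lam)
    (hn : 2 ≤ n) (x : EuclideanSpace ℝ (Fin n)) :
    |⟪x, Matrix.toEuclideanLin (G.adjMatrix ℝ) x⟫ - (d : ℝ) * (∑ i, x i)^2 / n|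
      ≤ lam * ⟪x, x⟫ := by
  have hA := adjMatrix_isHermitian G
  set T := Matrix.toEuclideanLin (G.adjMatrix ℝ) with hT
  have hsym : LinearMap.IsSymmetric T := Matrix.isHermitian_iff_isSymmetric.mp hA
  set μ : Fin n → ℝ := adjEigenvalues G with hμ
  set v := hA.eigenvectorBasis with hv
  have hTv : ∀ i, T (v i) = μ i • v i := fun i => by ext j; exact congrFun (hA.mulVec_eigenvectorBasis i) j
  have hinner : ∀ a b : EuclideanSpace ℝ (Fin n), ⟪a, b⟫ = ∑ i, a i * b i := fun a b => by
    simp [PiLp.inner_apply, RCLike.inner_apply, conj_trivial, mul_comm]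
  set u : EuclideanSpace ℝ (Fin n) := WithLp.toLp 2 (fun _ => 1) with hu
  have hn0 : (0:ℝ) < n := by positivity
  have hn0' : (n:ℝ) ≠ 0 := ne_of_gt hn0
  have hTu : T u = (d:ℝ) • u := by
    ext k
    show (G.adjMatrix ℝ *ᵥ Function.const _ (1:ℝ)) k = ((d:ℝ) • u) k
    rw [SimpleGraph.adjMatrix_mulVec_const_apply_of_regular hreg]
    simp [hu]
  have hux : ⟪u, x⟫ = ∑ i, x i := by simp [hinner, hu]
  have hcomm : ∀ a b : EuclideanSpace ℝ (Fin n), ⟪a, b⟫ = ⟪b, a⟫ := fun a b =>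
    (real_inner_comm b a)
  have hxu : ⟪x, u⟫ = ∑ i, x i := by rw [hcomm]; exact hux
  have huu : ⟪u, u⟫ = n := by rw [hinner]; simp [hu]
  set s := ∑ i : Fin n, x i with hs
  set c := s / n with hc
  set y := x - c • u with hy
  have hxy : x = c • u + y := by rw [hy]; abel
  have huy : ⟪u, y⟫ = 0 := by
    rw [hy, inner_sub_right, real_inner_smul_right, hux, huu, hc]
    field_simp
    ring
  have hyu : ⟪y, u⟫ = 0 := by rw [hcomm]; exact huy
  have h1 : ⟪u, T y⟫ = 0 := by
    rw [← hsym u y, hTu, real_inner_smul_left, huy, mul_zero]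
  have h2 : ⟪y, T u⟫ = 0 := by rw [hTu, real_inner_smul_right, hyu, mul_zero]
  have h3 : ⟪u, T u⟫ = d * n := by rw [hTu, real_inner_smul_right, huu]
  have quad_eq : ⟪x, T x⟫ = (d:ℝ) * s^2 / n + ⟪y, T y⟫ := by
    have e1 : ⟪x, T x⟫ = c * (c * (d * n)) + ⟪y, T y⟫ := by
      conv_lhs => rw [hxy]
      simp only [map_add, LinearMap.map_smul, inner_add_left, inner_add_right,
        real_inner_smul_left, real_inner_smul_right, smul_eq_mul, h1, h2, h3, huy,
        mul_zero, add_zero, zero_add]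
    rw [e1, hc]
    field_simp
  have hyy_le : ⟪y, y⟫ ≤ ⟪x, x⟫ := by
    have e2 : ⟪y, y⟫ = ⟪x, x⟫ - s^2 / n := by
      rw [hy, inner_sub_left, inner_sub_right, inner_sub_right, real_inner_smul_left,
        real_inner_smul_left, real_inner_smul_right, real_inner_smul_right,
        hux, hxu, huu, hc]
      field_simp
      ring
    rw [e2]
    have : 0 ≤ s^2 / n := by positivity
    linarith
  set f : Fin n → ℝ := fun i => ⟪v i, y⟫ with hf
  have hyTy : ⟪y, T y⟫ = ∑ i, μ i * (f i)^2 := by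
    rw [← v.sum_inner_mul_inner y (T y)]
    refine Finset.sum_congr rfl fun i _ => ?_
    have e3 : ⟪v i, T y⟫ = μ i * f i := by
      rw [← hsym (v i) y, hTv i, real_inner_smul_left, hf]
    rw [e3, hcomm y (v i)]
    show f i * (μ i * f i) = μ i * (f i)^2
    ring
  have hyy_eq : ⟪y, y⟫ = ∑ i, (f i)^2 := by
    rw [← v.sum_inner_mul_inner y y]
    refine Finset.sum_congr rfl fun i _ => ?_
    rw [hcomm y (v i)]
    show f i * f i = (f i)^2
    ring
  have lam0 : 0 ≤ lam := by
    haveI : Nontrivial (Fin n) := by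
      refine ⟨⟨0, by omega⟩, ⟨1, by omega⟩, ?_⟩
      simp [Fin.ext_iff]
    obtain ⟨j, hj⟩ := exists_ne i₀
    exact (abs_nonneg _).trans (hlam j hj)
  have key : |⟪y, T y⟫| ≤ lam * ⟪y, y⟫ := by
    rw [hyTy, hyy_eq, Finset.mul_sum]
    refine (Finset.abs_sum_le_sum_abs _ _).trans (Finset.sum_le_sum fun i _ => ?_)
    rw [abs_mul, abs_of_nonneg (sq_nonneg (f i))]
    by_cases hi : i = i₀
    · subst hi
      by_cases hd : (d:ℝ) ≤ lam
      · exact mul_le_mul_of_nonneg_right ((abs_adjEigenvalue_le G hreg i).trans hd) (sq_nonneg _)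
      · push_neg at hd
        have hvu : ∀ j : Fin n, j ≠ i → ⟪v j, u⟫ = 0 := by
          intro j hj
          have e4 : μ j * ⟪v j, u⟫ = (d:ℝ) * ⟪v j, u⟫ := by
            calc μ j * ⟪v j, u⟫ = ⟪μ j • v j, u⟫ := (real_inner_smul_left _ _ _).symm
              _ = ⟪T (v j), u⟫ := by rw [hTv j]
              _ = ⟪v j, T u⟫ := hsym _ _
              _ = (d:ℝ) * ⟪v j, u⟫ := by rw [hTu, real_inner_smul_right]
          have hne : μ j - (d:ℝ) ≠ 0 := by
            intro h
            have h5 := hlam j hj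
            have h6 : (d:ℝ) ≤ lam := by
              have : μ j = (d:ℝ) := by linarith [sub_eq_zero.mp h]
              calc (d:ℝ) = μ j := this.symm
                _ ≤ |μ j| := le_abs_self _
                _ ≤ lam := h5
            linarith
          have e5 : (μ j - (d:ℝ)) * ⟪v j, u⟫ = 0 := by linarith
          exact (mul_eq_zero.mp e5).resolve_left hne
        have hvi0u : ⟪v i, u⟫ ≠ 0 := by
          intro h0
          have hexp : ⟪u, u⟫ = ∑ j, ⟪u, v j⟫ * ⟪v j, u⟫ := (v.sum_inner_mul_inner u u).symm
          have hz : ⟪u, u⟫ = 0 := by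
            rw [hexp]
            refine Finset.sum_eq_zero fun j _ => ?_
            by_cases hji : j = i
            · subst hji; rw [h0, mul_zero]
            · rw [hvu j hji, mul_zero]
          rw [huu] at hz
          exact hn0' hz
        have hfz : f i = 0 := by
          have hexp : ⟪u, y⟫ = ∑ j, ⟪u, v j⟫ * ⟪v j, y⟫ := (v.sum_inner_mul_inner u y).symm
          rw [huy] at hexp
          have e6 : (0:ℝ) = ⟪u, v i⟫ * f i := by
            rw [hexp]
            rw [Finset.sum_eq_single i]
            · intro j _ hji
              rw [hcomm u (v j), hvu j hji, zero_mul]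
            · intro h; exact absurd (Finset.mem_univ i) h
          have e7 : ⟪u, v i⟫ ≠ 0 := by rwa [hcomm]
          have := e6.symm
          exact (mul_eq_zero.mp this).resolve_left e7
        rw [hfz]
        simp [lam0]
    · exact mul_le_mul_of_nonneg_right (hlam i hi) (sq_nonneg _)
  calc |⟪x, T x⟫ - (d:ℝ) * s^2 / n| = |⟪y, T y⟫| := by rw [quad_eq]; ring_nf
    _ ≤ lam * ⟪y, y⟫ := key
    _ ≤ lam * ⟪x, x⟫ := mul_le_mul_of_nonneg_left hyy_le lam0


lemma double_count {n : ℕ} (G : SimpleGraph (Fin n)) [DecidableRel G.Adj] (B : Finset (Fin n)) :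
    ∑ i ∈ B, ∑ j ∈ B, (if G.Adj i j then 1 else 0)
      = 2 * (G.induce (↑B : Set (Fin n))).edgeSet.ncard := by
  set H := G.induce (↑B : Set (Fin n)) with hH
  have hsub : ∀ (f : Fin n → ℕ), ∑ i ∈ B, f i = ∑ i : (↑B : Set (Fin n)), f ↑i :=
    fun f => Finset.sum_subtype B (fun x => Finset.mem_coe.symm) f
  have hcard : H.edgeSet.ncard = H.edgeFinset.card := by
    rw [Set.ncard_eq_toFinset_card']
    rfl
  have hdeg : ∀ v : (↑B : Set (Fin n)), H.degree v = ∑ j ∈ B, (if G.Adj ↑v j then 1 else 0) := by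
    intro v
    rw [hsub]
    rw [SimpleGraph.degree,
      show H.neighborFinset v = Finset.univ.filter (H.Adj v) from by ext w; simp,
      Finset.card_filter]
    exact Finset.sum_congr rfl fun j _ => by congr 1
  rw [hsub]
  calc ∑ i : (↑B : Set (Fin n)), (∑ j ∈ B, if G.Adj (↑i) j then 1 else 0)
      = ∑ v : (↑B : Set (Fin n)), H.degree v := Finset.sum_congr rfl fun v _ => (hdeg v).symm
    _ = 2 * H.edgeFinset.card := SimpleGraph.sum_degrees_eq_twice_card_edges H
    _ = 2 * H.edgeSet.ncard := by rw [hcard]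



/-- If `G` is an `(n, d, λ)`-graph, `B` a set of `b ≥ 2` vertices, `m` the number of edges of
the induced subgraph `G[B]` and `p = m / (b choose 2)`, then `|p − d/n| ≤ (λ + 1)/(b − 1)`. -/
theorem induced_density_close {n d : ℕ} (lam : ℝ) (G : SimpleGraph (Fin n))
    [DecidableRel G.Adj] (hG : IsNDLGraph G d lam) (B : Finset (Fin n)) (hB : 2 ≤ B.card) :
    |((G.induce (↑B : Set (Fin n))).edgeSet.ncard : ℝ) / (B.card.choose 2 : ℝ) - (d : ℝ) / n|
      ≤ (lam + 1) / ((B.card : ℝ) - 1) := by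
  obtain ⟨hreg, i₀, hlam⟩ := hG
  have hBn : B.card ≤ n := by
    have := Finset.card_le_univ B
    simpa using this
  have hn : 2 ≤ n := le_trans hB hBn
  have hn0 : (0:ℝ) < n := by positivity
  obtain ⟨v₀, hv₀⟩ := Finset.card_pos.mp (show 0 < B.card by omega)
  have hdn : d < n := by
    have h := G.degree_lt_card_verts v₀
    rwa [hreg v₀, Fintype.card_fin] at h
  have hinner : ∀ a b : EuclideanSpace ℝ (Fin n), ⟪a, b⟫ = ∑ i, a i * b i := fun a b => by
    simp [PiLp.inner_apply, RCLike.inner_apply, conj_trivial, mul_comm]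
  classical
  set x : EuclideanSpace ℝ (Fin n) := WithLp.toLp 2 (fun i => if i ∈ B then 1 else 0) with hx
  have hsum : ∑ i, x i = (B.card : ℝ) := by
    rw [hx]
    rw [Finset.sum_ite_mem, Finset.univ_inter, Finset.sum_const, nsmul_eq_mul, mul_one]
  have hxx : ⟪x, x⟫ = (B.card : ℝ) := by
    rw [hinner, ← hsum]
    refine Finset.sum_congr rfl fun i _ => ?_
    rw [hx]
    dsimp only
    split <;> norm_num
  have hxleft : ∀ (g : Fin n → ℝ), ∑ i, x i * g i = ∑ i ∈ B, g i := by
    intro g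
    calc ∑ i, x i * g i = ∑ i, if i ∈ B then g i else 0 :=
          Finset.sum_congr rfl fun i _ => by rw [hx]; dsimp only; split <;> simp
      _ = ∑ i ∈ Finset.univ ∩ B, g i := Finset.sum_ite_mem _ _ _
      _ = ∑ i ∈ B, g i := by rw [Finset.univ_inter]
  have hxright : ∀ (g : Fin n → ℝ), ∑ j, g j * x j = ∑ j ∈ B, g j := by
    intro g
    calc ∑ j, g j * x j = ∑ j, if j ∈ B then g j else 0 :=
          Finset.sum_congr rfl fun j _ => by rw [hx]; dsimp only; split <;> simp
      _ = ∑ j ∈ Finset.univ ∩ B, g j := Finset.sum_ite_mem _ _ _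
      _ = ∑ j ∈ B, g j := by rw [Finset.univ_inter]
  set m : ℝ := ((G.induce (↑B : Set (Fin n))).edgeSet.ncard : ℝ) with hm
  have hxTx : ⟪x, Matrix.toEuclideanLin (G.adjMatrix ℝ) x⟫ = 2 * m := by
    rw [hinner]
    have hTxk : ∀ k, (Matrix.toEuclideanLin (G.adjMatrix ℝ) x) k
        = ∑ j, (G.adjMatrix ℝ) k j * x j := fun k => rfl
    calc ∑ i, x i * (Matrix.toEuclideanLin (G.adjMatrix ℝ) x) i
        = ∑ i, x i * ∑ j, (G.adjMatrix ℝ) i j * x j := by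
          exact Finset.sum_congr rfl fun i _ => by rw [hTxk]
      _ = ∑ i ∈ B, ∑ j, (G.adjMatrix ℝ) i j * x j := hxleft _
      _ = ∑ i ∈ B, ∑ j ∈ B, (G.adjMatrix ℝ) i j :=
          Finset.sum_congr rfl fun i _ => hxright _
      _ = ((∑ i ∈ B, ∑ j ∈ B, if G.Adj i j then 1 else 0 : ℕ) : ℝ) := by
          push_cast
          refine Finset.sum_congr rfl fun i _ => Finset.sum_congr rfl fun j _ => ?_
          simp [SimpleGraph.adjMatrix_apply]
      _ = 2 * m := by rw [double_count, hm]; push_cast; ring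
  have hmix := quadform_bound G hreg i₀ hlam hn x
  rw [hxTx, hsum, hxx] at hmix
  set b : ℝ := (B.card : ℝ) with hb
  have hb2 : (2:ℝ) ≤ b := by rw [hb]; exact_mod_cast hB
  have hb0 : (0:ℝ) < b := by linarith
  have hb1 : (0:ℝ) < b - 1 := by linarith
  have hq : (d:ℝ)/n ≤ 1 := by
    rw [div_le_one hn0]
    exact_mod_cast hdn.le
  have key : |2*m - ((d:ℝ)/n)*(b*(b-1))| ≤ (lam+1)*b := by
    have t1 : |2*m - ((d:ℝ)/n)*(b*(b-1))|
        ≤ |2*m - (d:ℝ)*b^2/n| + |(d:ℝ)*b^2/n - ((d:ℝ)/n)*(b*(b-1))| := abs_sub_le _ _ _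
    have t2 : |(d:ℝ)*b^2/n - ((d:ℝ)/n)*(b*(b-1))| = ((d:ℝ)/n) * b := by
      have e : (d:ℝ)*b^2/n - ((d:ℝ)/n)*(b*(b-1)) = ((d:ℝ)/n)*b := by
        field_simp
        ring
      rw [e, abs_of_nonneg (by positivity)]
    have t3 : ((d:ℝ)/n) * b ≤ 1 * b := mul_le_mul_of_nonneg_right hq (le_of_lt hb0)
    calc |2*m - ((d:ℝ)/n)*(b*(b-1))|
        ≤ |2*m - (d:ℝ)*b^2/n| + |(d:ℝ)*b^2/n - ((d:ℝ)/n)*(b*(b-1))| := t1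
      _ ≤ lam * b + ((d:ℝ)/n) * b := by rw [t2]; exact add_le_add hmix le_rfl
      _ ≤ lam * b + 1 * b := add_le_add le_rfl t3
      _ = (lam+1)*b := by ring
  have hchoose : ((B.card.choose 2 : ℕ) : ℝ) = b * (b - 1) / 2 := Nat.cast_choose_two (K := ℝ) B.card
  have hbb : (0:ℝ) < b * (b - 1) := mul_pos hb0 hb1
  have hrw : m / ((B.card.choose 2 : ℕ) : ℝ) - (d:ℝ)/n
      = (2*m - ((d:ℝ)/n)*(b*(b-1))) / (b*(b-1)) := by
    rw [hchoose]
    field_simp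
  rw [hrw, abs_div, abs_of_pos hbb]
  calc |2*m - ((d:ℝ)/n)*(b*(b-1))| / (b*(b-1)) ≤ ((lam+1)*b) / (b*(b-1)) := by
        exact (div_le_div_iff_of_pos_right hbb).mpr key
    _ = (lam+1)/(b-1) := by
        rw [div_eq_div_iff (ne_of_gt hbb) (ne_of_gt hb1)]
        ring

end Aux
end

section
/- For every ξ > 0 there exist ε > 0 and n₀ ∈ ℕ such that the following holds. Let G be an (n, d, λ)-graph with n ≥ n₀ and λ < ε·d, let B be a subset of its vertices with |B| ≥ n/20, let m be the number of edges of the induced subgraph G[B], set b = |B| and p = m / (b choose 2). Then for every pair of disjoint subsets S, T ⊆ B with |S| ≥ ξ·n and |T| ≥ ξ·n, one has |e_G(S, T) − p·|S|·|T|| ≤ ξ·|S|·|T|·p. -/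
open SimpleGraph Finset Matrix
open scoped InnerProductSpace

/-- `e_G(S, T)`: the number of edges of `G` with one endpoint in `S` and one endpoint in `T`,
where edges with both endpoints in `S ∩ T` are counted twice (ordered pair count). -/
def edgeCountBetween {n : ℕ} (G : SimpleGraph (Fin n)) [DecidableRel G.Adj]
    (S T : Finset (Fin n)) : ℕ :=
  ((S ×ˢ T).filter fun p => G.Adj p.1 p.2).card

lemma spectral_expand {n : ℕ} {A : Matrix (Fin n) (Fin n) ℝ} (hA : A.IsHermitian)
    (x y : EuclideanSpace ℝ (Fin n)) :
    ⟪x, (Matrix.toEuclideanLin A) y⟫_ℝ =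
      ∑ i, hA.eigenvalues i * ⟪hA.eigenvectorBasis i, x⟫_ℝ * ⟪hA.eigenvectorBasis i, y⟫_ℝ := by
  set L := Matrix.toEuclideanLin A with hL
  have hLu : ∀ i, L (hA.eigenvectorBasis i) = hA.eigenvalues i • hA.eigenvectorBasis i := by
    intro i
    have h := hA.mulVec_eigenvectorBasis i
    apply (WithLp.equiv 2 _).injective
    simpa [hL, Matrix.toEuclideanLin_apply] using h
  have hLy : L y = ∑ i, ⟪hA.eigenvectorBasis i, y⟫_ℝ • (hA.eigenvalues i • hA.eigenvectorBasis i) := by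
    conv_lhs => rw [← (hA.eigenvectorBasis).sum_repr' y]
    rw [map_sum]
    exact Finset.sum_congr rfl fun i _ => by rw [_root_.map_smul, hLu i]
  rw [hLy, inner_sum]
  refine Finset.sum_congr rfl fun i _ => ?_
  rw [real_inner_smul_right, real_inner_smul_right, real_inner_comm x]
  ring

noncomputable def indVec {n : ℕ} (S : Finset (Fin n)) : EuclideanSpace ℝ (Fin n) :=
  WithLp.toLp 2 (fun i => if i ∈ S then (1:ℝ) else 0)

lemma inner_indVec {n : ℕ} (S : Finset (Fin n)) (x : EuclideanSpace ℝ (Fin n)) :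
    ⟪indVec S, x⟫_ℝ = ∑ i ∈ S, x i := by
  simp [PiLp.inner_apply, indVec, RCLike.inner_apply, ite_mul, Finset.sum_ite_mem]

lemma inner_indVec_self {n : ℕ} (S : Finset (Fin n)) :
    ⟪indVec S, indVec S⟫_ℝ = S.card := by
  rw [inner_indVec]
  simp [indVec]

lemma inner_indVec_mulVec {n : ℕ} (G : SimpleGraph (Fin n)) [DecidableRel G.Adj]
    (S T : Finset (Fin n)) :
    ⟪indVec S, Matrix.toEuclideanLin (G.adjMatrix ℝ) (indVec T)⟫_ℝ
      = edgeCountBetween G S T := by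
  rw [inner_indVec]
  have h : ∀ i : Fin n, (Matrix.toEuclideanLin (G.adjMatrix ℝ) (indVec T)) i
      = ∑ j ∈ T, if G.Adj i j then (1:ℝ) else 0 := by
    intro i
    show (Matrix.mulVec (G.adjMatrix ℝ) (indVec T)) i = _
    simp [Matrix.mulVec, dotProduct, indVec, SimpleGraph.adjMatrix_apply,
      mul_ite, mul_one, mul_zero, ite_mul, zero_mul, one_mul, Finset.sum_ite_mem]
  rw [Finset.sum_congr rfl fun i _ => h i, edgeCountBetween, Finset.card_filter,
    Finset.sum_product]
  push_cast
  rfl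

theorem expander_mixing {n d : ℕ} {lam : ℝ} {G : SimpleGraph (Fin n)} [DecidableRel G.Adj]
    (hn : 2 ≤ n) (hreg : G.IsRegularOfDegree d) {i₀ : Fin n}
    (hlam : ∀ i, i ≠ i₀ → |adjEigenvalues G i| ≤ lam) (hlamd : lam < d)
    (S T : Finset (Fin n)) :
    |(edgeCountBetween G S T : ℝ) - d * S.card * T.card / n| ≤
      lam * (Real.sqrt S.card * Real.sqrt T.card) := by
  classical
  have hn0 : (0:ℝ) < n := by exact_mod_cast Nat.lt_of_lt_of_le two_pos hn
  -- lam is nonnegative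
  have hlam0 : 0 ≤ lam := by
    obtain ⟨i, hi⟩ : ∃ i : Fin n, i ≠ i₀ := by
      rcases eq_or_ne (⟨0, by omega⟩ : Fin n) i₀ with h | h
      · exact ⟨⟨1, by omega⟩, by rw [← h]; simp [Fin.ext_iff]⟩
      · exact ⟨_, h⟩
    exact le_trans (abs_nonneg _) (hlam i hi)
  set A := G.adjMatrix ℝ with hAdef
  have hA : A.IsHermitian := adjMatrix_isHermitian G
  set L := Matrix.toEuclideanLin A with hL
  set u : Fin n → EuclideanSpace ℝ (Fin n) := fun i => hA.eigenvectorBasis i with hu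
  set mu : Fin n → ℝ := hA.eigenvalues with hmu
  have hsym : L.IsSymmetric := (Matrix.isHermitian_iff_isSymmetric).1 hA
  set one : EuclideanSpace ℝ (Fin n) := WithLp.toLp 2 (fun _ => (1:ℝ)) with hone
  have honeL : L one = (d : ℝ) • one := by
    apply (WithLp.equiv 2 _).injective
    funext i
    show (Matrix.mulVec A (WithLp.ofLp one)) i = ((d:ℝ) • one) i
    have hdeg := hreg i
    simp only [SimpleGraph.degree, SimpleGraph.neighborFinset] at hdeg
    simp only [Matrix.mulVec, dotProduct, hAdef, SimpleGraph.adjMatrix_apply, hone,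
      mul_one, Pi.smul_apply, smul_eq_mul]
    rw [Finset.sum_boole]
    have hdeg2 : (Finset.univ.filter (fun x => G.Adj i x)).card = d := by
      rw [← SimpleGraph.neighborFinset_eq_filter]
      exact hreg i
    rw [hdeg2]
    simp
  have hLu : ∀ i, L (u i) = mu i • u i := by
    intro i
    have h := hA.mulVec_eigenvectorBasis i
    apply (WithLp.equiv 2 _).injective
    simpa [hL, Matrix.toEuclideanLin_apply] using h
  set c : Fin n → ℝ := fun i => ⟪u i, one⟫_ℝ with hc
  have key : ∀ i, mu i * c i = d * c i := by
    intro i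
    have h1 : ⟪u i, L one⟫_ℝ = ⟪L (u i), one⟫_ℝ := (hsym (u i) one).symm
    rw [honeL, hLu i, real_inner_smul_left, real_inner_smul_right] at h1
    linarith [h1]
  have hc0 : ∀ i, i ≠ i₀ → c i = 0 := by
    intro i hi
    have hmud : mu i ≠ (d:ℝ) := by
      intro hEq
      have h2 := hlam i hi
      rw [show adjEigenvalues G i = mu i from rfl, hEq] at h2
      rw [abs_of_nonneg (by positivity)] at h2
      linarith
    have h3 : (mu i - d) * c i = 0 := by linarith [key i]
    exact (mul_eq_zero.1 h3).resolve_left (sub_ne_zero.2 hmud)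
  have hinner_one : ⟪one, one⟫_ℝ = n := by
    rw [PiLp.inner_apply]
    simp [PiLp.inner_apply, hone, RCLike.inner_apply]
  have hpars : ∑ i, c i * c i = n := by
    have h := (hA.eigenvectorBasis).sum_inner_mul_inner one one
    rw [hinner_one] at h
    rw [← h]
    refine Finset.sum_congr rfl fun i _ => ?_
    show ⟪hA.eigenvectorBasis i, one⟫_ℝ * ⟪hA.eigenvectorBasis i, one⟫_ℝ = _
    rw [real_inner_comm (hA.eigenvectorBasis i) one]
  have hci₀ : c i₀ * c i₀ = n := by
    rw [← hpars]
    symm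
    apply Finset.sum_eq_single i₀
    · intro i _ hi
      rw [hc0 i hi, mul_zero]
    · intro h
      exact absurd (Finset.mem_univ i₀) h
  have hcne : c i₀ ≠ 0 := by
    intro h
    rw [h, mul_zero] at hci₀
    exact absurd hci₀.symm (ne_of_gt hn0)
  have hmu₀ : mu i₀ = d := mul_right_cancel₀ hcne (key i₀)
  have hind : ∀ W : Finset (Fin n), c i₀ * ⟪u i₀, indVec W⟫_ℝ = W.card := by
    intro W
    have h := (hA.eigenvectorBasis).sum_inner_mul_inner one (indVec W)
    have h2 : ⟪one, indVec W⟫_ℝ = W.card := by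
      rw [real_inner_comm, inner_indVec]
      simp [hone]
    rw [h2] at h
    rw [← h]
    rw [Finset.sum_eq_single i₀ (fun i _ hi => by
      rw [show ⟪one, hA.eigenvectorBasis i⟫_ℝ = c i from real_inner_comm (hA.eigenvectorBasis i) one,
        hc0 i hi, zero_mul])
      (fun h => absurd (Finset.mem_univ i₀) h)]
    rw [show ⟪one, hA.eigenvectorBasis i₀⟫_ℝ = c i₀ from real_inner_comm (hA.eigenvectorBasis i₀) one]
  set a : Fin n → ℝ := fun i => ⟪u i, indVec S⟫_ℝ with ha
  set b : Fin n → ℝ := fun i => ⟪u i, indVec T⟫_ℝ with hb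
  have hexp : (edgeCountBetween G S T : ℝ) = ∑ i, mu i * a i * b i := by
    rw [← inner_indVec_mulVec G S T]
    exact spectral_expand hA (indVec S) (indVec T)
  have hmainterm : mu i₀ * a i₀ * b i₀ = d * S.card * T.card / n := by
    rw [eq_div_iff (ne_of_gt hn0), hmu₀]
    calc (d:ℝ) * a i₀ * b i₀ * n = (d:ℝ) * ((c i₀ * a i₀) * (c i₀ * b i₀)) := by
          rw [← hci₀]; ring
      _ = d * S.card * T.card := by rw [hind S, hind T]; ring
  have hsplit : (edgeCountBetween G S T : ℝ) - d * S.card * T.card / n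
      = ∑ i ∈ Finset.univ.erase i₀, mu i * a i * b i := by
    rw [hexp, ← hmainterm, ← Finset.add_sum_erase Finset.univ _ (Finset.mem_univ i₀)]
    ring
  rw [hsplit]
  -- Parseval bounds
  have hparsS : ∑ i, a i ^ 2 = (S.card : ℝ) := by
    have h := (hA.eigenvectorBasis).sum_inner_mul_inner (indVec S) (indVec S)
    rw [inner_indVec_self] at h
    rw [← h]
    refine Finset.sum_congr rfl fun i _ => ?_
    rw [sq, show ⟪indVec S, hA.eigenvectorBasis i⟫_ℝ = a i from
      real_inner_comm (hA.eigenvectorBasis i) (indVec S)]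
  have hparsT : ∑ i, b i ^ 2 = (T.card : ℝ) := by
    have h := (hA.eigenvectorBasis).sum_inner_mul_inner (indVec T) (indVec T)
    rw [inner_indVec_self] at h
    rw [← h]
    refine Finset.sum_congr rfl fun i _ => ?_
    rw [sq, show ⟪indVec T, hA.eigenvectorBasis i⟫_ℝ = b i from
      real_inner_comm (hA.eigenvectorBasis i) (indVec T)]
  calc |∑ i ∈ Finset.univ.erase i₀, mu i * a i * b i|
      ≤ ∑ i ∈ Finset.univ.erase i₀, |mu i * a i * b i| := Finset.abs_sum_le_sum_abs _ _
    _ ≤ ∑ i ∈ Finset.univ.erase i₀, lam * (|a i| * |b i|) := by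
        refine Finset.sum_le_sum fun i hi => ?_
        rw [abs_mul, abs_mul]
        have h := hlam i (Finset.ne_of_mem_erase hi)
        exact mul_le_mul_of_nonneg_right (mul_le_mul_of_nonneg_right h (abs_nonneg _))
          (abs_nonneg _) |>.trans (le_of_eq (by ring))
    _ = lam * ∑ i ∈ Finset.univ.erase i₀, |a i| * |b i| := by rw [Finset.mul_sum]
    _ ≤ lam * (Real.sqrt S.card * Real.sqrt T.card) := by
        refine mul_le_mul_of_nonneg_left ?_ hlam0
        calc ∑ i ∈ Finset.univ.erase i₀, |a i| * |b i|
            ≤ Real.sqrt (∑ i ∈ Finset.univ.erase i₀, |a i| ^ 2) *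
                Real.sqrt (∑ i ∈ Finset.univ.erase i₀, |b i| ^ 2) :=
              Real.sum_mul_le_sqrt_mul_sqrt _ _ _
          _ ≤ Real.sqrt S.card * Real.sqrt T.card := by
              have hS : ∑ i ∈ Finset.univ.erase i₀, |a i| ^ 2 ≤ (S.card : ℝ) := by
                rw [← hparsS]
                simp only [sq_abs]
                exact Finset.sum_le_sum_of_subset_of_nonneg (Finset.subset_univ _)
                  (fun i _ _ => sq_nonneg _)
              have hT : ∑ i ∈ Finset.univ.erase i₀, |b i| ^ 2 ≤ (T.card : ℝ) := by
                rw [← hparsT]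
                simp only [sq_abs]
                exact Finset.sum_le_sum_of_subset_of_nonneg (Finset.subset_univ _)
                  (fun i _ _ => sq_nonneg _)
              exact mul_le_mul (Real.sqrt_le_sqrt hS) (Real.sqrt_le_sqrt hT)
                (Real.sqrt_nonneg _) (Real.sqrt_nonneg _)

lemma induced_count {n : ℕ} (G : SimpleGraph (Fin n)) [DecidableRel G.Adj]
    (B : Finset (Fin n)) :
    2 * (G.induce (↑B : Set (Fin n))).edgeSet.ncard = edgeCountBetween G B B := by
  classical
  have h1 : (G.induce (↑B : Set (Fin n))).edgeSet.ncard
      = (G.induce (↑B : Set (Fin n))).edgeFinset.card := by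
    rw [← SimpleGraph.coe_edgeFinset, Set.ncard_coe_finset]
  rw [h1, ← SimpleGraph.sum_degrees_eq_twice_card_edges]
  have h2 : ∀ v : (↑B : Set (Fin n)), (G.induce (↑B : Set (Fin n))).degree v
      = ∑ u : (↑B : Set (Fin n)), if G.Adj v.1 u.1 then 1 else 0 := by
    intro v
    rw [SimpleGraph.degree, SimpleGraph.neighborFinset_eq_filter, Finset.card_filter]
    refine Finset.sum_congr rfl fun u _ => ?_
    congr 1
  rw [Finset.sum_congr rfl fun v _ => h2 v]
  rw [edgeCountBetween, Finset.card_filter, Finset.sum_product]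
  rw [← Finset.sum_coe_sort B]
  refine Finset.sum_congr rfl fun v _ => ?_
  rw [← Finset.sum_coe_sort B]
  rfl

/-- For every `ξ > 0` there are `ε > 0` and `n₀` such that in every `(n, d, λ)`-graph with
`n ≥ n₀` and `λ < ε·d`, for every `B` with `|B| ≥ n/20`, setting `m = |E(G[B])|`, `b = |B|`
and `p = m / (b choose 2)`, every pair of disjoint `S, T ⊆ B` of size at least `ξ·n`
satisfies `|e_G(S, T) − p·|S|·|T|| ≤ ξ·|S|·|T|·p`. -/
theorem mixing_in_induced_subgraph (ξ : ℝ) (hξ : 0 < ξ) :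
    ∃ ε : ℝ, 0 < ε ∧ ∃ n₀ : ℕ, ∀ (n d : ℕ) (lam : ℝ) (G : SimpleGraph (Fin n))
      [DecidableRel G.Adj] (B : Finset (Fin n)), n₀ ≤ n → IsNDLGraph G d lam →
      lam < ε * d → (n : ℝ) / 20 ≤ B.card →
      ∀ S T : Finset (Fin n), S ⊆ B → T ⊆ B → Disjoint S T →
        ξ * n ≤ S.card → ξ * n ≤ T.card →
        |(edgeCountBetween G S T : ℝ) -
            ((G.induce (↑B : Set (Fin n))).edgeSet.ncard : ℝ) / (B.card.choose 2 : ℝ)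
              * S.card * T.card| ≤
          ξ * S.card * T.card *
            (((G.induce (↑B : Set (Fin n))).edgeSet.ncard : ℝ) / (B.card.choose 2 : ℝ)) := by
  classical
  refine ⟨min (min (ξ^3/8) (ξ/320)) (1/40), by positivity, max 40 ⌈(320:ℝ)/ξ⌉₊, ?_⟩
  intro n d lam G _ B hn hndl hlamd hB S T hSB hTB hST hS hT
  obtain ⟨hreg, i₀, hlam⟩ := hndl
  set ε : ℝ := min (min (ξ^3/8) (ξ/320)) (1/40) with hε
  have hε1 : ε ≤ ξ^3/8 := le_trans (min_le_left _ _) (min_le_left _ _)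
  have hε2 : ε ≤ ξ/320 := le_trans (min_le_left _ _) (min_le_right _ _)
  have hε3 : ε ≤ 1/40 := min_le_right _ _
  have hε0 : 0 < ε := by positivity
  have hn40 : 40 ≤ n := le_trans (le_max_left _ _) hn
  set N : ℝ := (n : ℝ) with hNdef
  have hN : (40:ℝ) ≤ N := by rw [hNdef]; exact_mod_cast hn40
  have hN0 : (0:ℝ) < N := by linarith
  have hξN : 320 ≤ ξ * N := by
    have h1 : ((320:ℝ)/ξ) ≤ N := by
      calc (320:ℝ)/ξ ≤ (⌈(320:ℝ)/ξ⌉₊ : ℝ) := Nat.le_ceil _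
        _ ≤ N := by rw [hNdef]; exact_mod_cast le_trans (le_max_right 40 _) hn
    calc (320:ℝ) = (320/ξ) * ξ := by field_simp
      _ ≤ N * ξ := mul_le_mul_of_nonneg_right h1 hξ.le
      _ = ξ * N := mul_comm _ _
  have hn2 : 2 ≤ n := by omega
  have hlam0 : 0 ≤ lam := by
    obtain ⟨i, hi⟩ : ∃ i : Fin n, i ≠ i₀ := by
      rcases eq_or_ne (⟨0, by omega⟩ : Fin n) i₀ with h | h
      · exact ⟨⟨1, by omega⟩, by rw [← h]; simp [Fin.ext_iff]⟩
      · exact ⟨_, h⟩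
    exact le_trans (abs_nonneg _) (hlam i hi)
  have hd0 : 0 < d := by
    by_contra h
    have hd : d = 0 := by omega
    rw [hd] at hlamd
    simp at hlamd
    linarith
  have hd1 : (1:ℝ) ≤ (d:ℝ) := by exact_mod_cast hd0
  have hdR0 : (0:ℝ) < (d:ℝ) := by linarith
  have hlamd' : lam < (d:ℝ) := by
    have h1 : ε * (d:ℝ) ≤ (1/40:ℝ) * (d:ℝ) := mul_le_mul_of_nonneg_right hε3 hdR0.le
    linarith only [hlamd, h1, hd1]
  set sR : ℝ := (S.card : ℝ) with hsRdef
  set tR : ℝ := (T.card : ℝ) with htRdef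
  set bR : ℝ := (B.card : ℝ) with hbRdef
  have hsN : sR ≤ N := by
    rw [hsRdef, hNdef]
    exact_mod_cast (Finset.card_le_univ S).trans_eq (Fintype.card_fin n)
  have htN : tR ≤ N := by
    rw [htRdef, hNdef]
    exact_mod_cast (Finset.card_le_univ T).trans_eq (Fintype.card_fin n)
  have hbN : bR ≤ N := by
    rw [hbRdef, hNdef]
    exact_mod_cast (Finset.card_le_univ B).trans_eq (Fintype.card_fin n)
  have hsR0 : 0 ≤ sR := by rw [hsRdef]; exact Nat.cast_nonneg _
  have htR0 : 0 ≤ tR := by rw [htRdef]; exact Nat.cast_nonneg _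
  have hξ1 : ξ ≤ 1 := by nlinarith only [hS, hsN, hN]
  have hb2 : (2:ℝ) ≤ bR := le_trans (by linarith) hB
  have hA : N/40 ≤ bR - 1 := by linarith [hB]
  have hA0 : (0:ℝ) < bR - 1 := by linarith
  have hmixST := expander_mixing hn2 hreg hlam hlamd' S T
  have hmixBB := expander_mixing hn2 hreg hlam hlamd' B B
  rw [← hsRdef, ← htRdef, ← hNdef] at hmixST
  rw [← hbRdef, ← hNdef] at hmixBB
  set E : ℝ := (edgeCountBetween G S T : ℝ) with hEdef
  set M : ℝ := ((G.induce (↑B : Set (Fin n))).edgeSet.ncard : ℝ) with hMdef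
  set C : ℝ := ((B.card.choose 2 : ℕ) : ℝ) with hCdef
  have hC : C = bR * (bR - 1) / 2 := by
    rw [hCdef, hbRdef]
    exact Nat.cast_choose_two (K := ℝ) B.card
  have hC0 : (0:ℝ) < C := by rw [hC]; nlinarith only [hb2]
  set P : ℝ := M / C with hPdef
  have hM : M = P * C := by rw [hPdef, div_mul_cancel₀ _ (ne_of_gt hC0)]
  have hMC : 2 * M = (edgeCountBetween G B B : ℝ) := by
    rw [hMdef]
    exact_mod_cast induced_count G B
  have hmixBB' : |2 * M - (d:ℝ) * bR * bR / N| ≤ lam * bR := by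
    rw [hMC]
    calc |(edgeCountBetween G B B : ℝ) - (d:ℝ) * bR * bR / N| ≤
        lam * (Real.sqrt bR * Real.sqrt bR) := hmixBB
      _ = lam * bR := by rw [Real.mul_self_sqrt (by linarith)]
  set q : ℝ := (d:ℝ) / N with hqdef
  have hq0 : 0 < q := by positivity
  have hdq : (d:ℝ) = q * N := by rw [hqdef, div_mul_cancel₀ _ (ne_of_gt hN0)]
  have hPA1 : P * (bR - 1) ≤ q * bR + lam := by
    have h := (abs_le.1 hmixBB').2
    apply le_of_mul_le_mul_right _ (show (0:ℝ) < bR by linarith)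
    calc P * (bR - 1) * bR = 2 * M := by rw [hM, hC]; ring
      _ ≤ (d:ℝ) * bR * bR / N + lam * bR := by linarith
      _ = (q * bR + lam) * bR := by rw [hdq]; field_simp
  have hPA2 : q * bR - lam ≤ P * (bR - 1) := by
    have h := (abs_le.1 hmixBB').1
    apply le_of_mul_le_mul_right _ (show (0:ℝ) < bR by linarith)
    calc (q * bR - lam) * bR = (d:ℝ) * bR * bR / N - lam * bR := by
          rw [hdq]; field_simp
      _ ≤ 2 * M := by linarith
      _ = P * (bR - 1) * bR := by rw [hM, hC]; ring
  have hlamεd : lam ≤ ε * (d:ℝ) := le_of_lt hlamd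
  have hq320 : q ≤ ξ * (d:ℝ) / 320 := by
    rw [hqdef, div_le_div_iff₀ hN0 (by norm_num)]
    have h1 := mul_le_mul_of_nonneg_left hξN hdR0.le
    linarith only [h1]
  have hlam320 : lam ≤ ξ * (d:ℝ) / 320 := by
    have h1 := mul_le_mul_of_nonneg_right hε2 hdR0.le
    linarith only [h1, hlamεd]
  have hkey2 : q + lam ≤ (ξ * q / 4) * (bR - 1) := by
    have h1 : (ξ * q / 4) * (N / 40) ≤ (ξ * q / 4) * (bR - 1) :=
      mul_le_mul_of_nonneg_left hA (by positivity)
    have h2 : (ξ * q / 4) * (N / 40) = ξ * (d:ℝ) / 160 := by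
      rw [hdq]; field_simp; ring
    linarith only [h1, h2, hq320, hlam320]
  have hPq : |P - q| ≤ ξ * q / 4 := by
    rw [abs_le]
    constructor
    · apply le_of_mul_le_mul_right _ hA0
      have hexp : -(ξ * q / 4) * (bR - 1) ≤ (P - q) * (bR - 1) ↔
          q * (bR-1) - (ξ * q / 4) * (bR - 1) ≤ P * (bR - 1) := by constructor <;> intro h <;> linarith only [h]
      rw [hexp]
      linarith only [hPA2, hkey2, hlam0, hq0]
    · apply le_of_mul_le_mul_right _ hA0
      have hexp : (P - q) * (bR - 1) ≤ ξ * q / 4 * (bR - 1) ↔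
          P * (bR - 1) ≤ q * (bR-1) + ξ * q / 4 * (bR - 1) := by constructor <;> intro h <;> linarith only [h]
      rw [hexp]
      linarith only [hPA1, hkey2]
  have hPlow : q / 2 ≤ P := by
    have h := (abs_le.1 hPq).1
    have h1 := mul_le_mul_of_nonneg_right hξ1 hq0.le
    linarith only [h, h1, hq0]
  have hsqrt : Real.sqrt sR * Real.sqrt tR ≤ N := by
    calc Real.sqrt sR * Real.sqrt tR ≤ Real.sqrt N * Real.sqrt N :=
        mul_le_mul (Real.sqrt_le_sqrt hsN) (Real.sqrt_le_sqrt htN)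
          (Real.sqrt_nonneg _) (Real.sqrt_nonneg _)
      _ = N := Real.mul_self_sqrt hN0.le
  have hmixST' : |E - q * sR * tR| ≤ lam * N := by
    have hrw : (d:ℝ) * sR * tR / N = q * sR * tR := by rw [hqdef]; ring
    calc |E - q * sR * tR| = |E - (d:ℝ) * sR * tR / N| := by rw [hrw]
      _ ≤ lam * (Real.sqrt sR * Real.sqrt tR) := hmixST
      _ ≤ lam * N := mul_le_mul_of_nonneg_left hsqrt hlam0
  have hstlb : ξ * N * (ξ * N) ≤ sR * tR :=
    mul_le_mul hS hT (by positivity) hsR0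
  have hst0 : 0 ≤ sR * tR := mul_nonneg hsR0 htR0
  have hlamN : lam * N ≤ (ξ^3/8) * (q * N * N) := by
    have hlq : lam ≤ ε * (q * N) := by rw [← hdq]; exact hlamεd
    have t1 := mul_le_mul_of_nonneg_right hlq hN0.le
    have t2 := mul_le_mul_of_nonneg_right hε1 (show (0:ℝ) ≤ q*N*N by positivity)
    linarith only [t1, t2]
  have hbig : (ξ^3/4) * (q * N * N) ≤ (ξ/2) * (sR * tR) * P := by
    have h1 : (ξ/2) * (ξ * N * (ξ * N)) * (q/2) ≤ (ξ/2) * (sR * tR) * P := by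
      apply mul_le_mul (mul_le_mul_of_nonneg_left hstlb (by positivity)) hPlow
        (by positivity) (mul_nonneg (by positivity) hst0)
    linarith only [h1]
  have hEub := (abs_le.1 hmixST').2
  have hElb := (abs_le.1 hmixST').1
  have hPqub := (abs_le.1 hPq).2
  have hPqlb := (abs_le.1 hPq).1
  have hmid1 : (sR * tR) * (q - P) ≤ (sR * tR) * (ξ * q / 4) :=
    mul_le_mul_of_nonneg_left (by linarith) hst0
  have hmid2 : (sR * tR) * (P - q) ≤ (sR * tR) * (ξ * q / 4) :=
    mul_le_mul_of_nonneg_left (by linarith) hst0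
  have hmid3 : (sR * tR) * (ξ * q / 4) ≤ (ξ/2) * (sR * tR) * P := by
    have h5 := mul_le_mul_of_nonneg_left (show q / 4 ≤ P / 2 by linarith only [hPlow])
      (show (0:ℝ) ≤ ξ * (sR * tR) from mul_nonneg hξ.le hst0)
    linarith only [h5]
  have hqNN : (0:ℝ) ≤ ξ^3/8 * (q*N*N) := by positivity
  have hgoal : |E - P * sR * tR| ≤ ξ * sR * tR * P := by
    rw [abs_le]
    constructor
    · linarith only [hElb, hmid2, hmid3, hlamN, hbig, hqNN]
    · linarith only [hEub, hmid1, hmid3, hlamN, hbig, hqNN]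
  exact hgoal
end

section
/- Let G be a finite simple graph, let U be a subset of its vertices and let S ⊆ U. Suppose that for every partition of U \ S into two sets X and Y with |X| ≥ |S|/3 and |Y| ≥ |S|/3, there is at least one edge of G with one endpoint in X and one endpoint in Y. Then the induced subgraph G[U \ S] has at most |S| connected components. -/
open SimpleGraph

/-- Let `G` be a finite simple graph, `U` a subset of its vertices and `S ⊆ U`. If for every
partition of `U \ S` into two sets `X`, `Y` with `|X| ≥ |S|/3` and `|Y| ≥ |S|/3` there is an
edge of `G` between `X` and `Y`, then `G[U \ S]` has at most `|S|` connected components. -/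
theorem components_le_of_partitions_connected (V : Type) [Fintype V] [DecidableEq V]
    (G : SimpleGraph V) (U S : Finset V) (hSU : S ⊆ U)
    (h : ∀ X Y : Finset V, X ∪ Y = U \ S → Disjoint X Y →
      (S.card : ℝ) / 3 ≤ X.card → (S.card : ℝ) / 3 ≤ Y.card →
      ∃ x ∈ X, ∃ y ∈ Y, G.Adj x y) :
    Nat.card (G.induce (↑(U \ S) : Set V)).ConnectedComponent ≤ S.card := by
  classical
  set W : Finset V := U \ S with hW
  set G' := G.induce (↑W : Set V) with hG'
  have hbound : ∀ n : ℕ, S.card ≤ 3 * n → (S.card : ℝ) / 3 ≤ n := by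
    intro n hn
    rw [div_le_iff₀ (by norm_num : (0:ℝ) < 3)]
    have : (S.card : ℝ) ≤ 3 * n := by exact_mod_cast hn
    linarith
  rcases Nat.eq_zero_or_pos S.card with hs0 | hs
  · obtain ⟨x, hx, -⟩ := h ∅ W (by simp) (by simp)
      (by simp [hs0]) (by simp [hs0])
    exact absurd hx (Finset.notMem_empty x)
  by_contra hc
  push_neg at hc
  letI : Fintype G'.ConnectedComponent := Fintype.ofFinite _
  have hc' : S.card + 1 ≤ Fintype.card G'.ConnectedComponent := by
    rwa [← Nat.card_eq_fintype_card, Nat.succ_le_iff]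
  -- the vertex set (in V) corresponding to a set of components
  set X : Finset G'.ConnectedComponent → Finset V := fun T =>
    W.filter (fun v => ∃ hv : v ∈ (↑W : Set V), G'.connectedComponentMk ⟨v, hv⟩ ∈ T)
    with hXdef
  have hmemX : ∀ (T) (v) (hv : v ∈ (↑W : Set V)),
      v ∈ X T ↔ G'.connectedComponentMk ⟨v, hv⟩ ∈ T := by
    intro T v hv
    simp only [hXdef, Finset.mem_filter]
    exact ⟨fun ⟨_, _, hk⟩ => hk, fun hk => ⟨hv, hv, hk⟩⟩
  have hXsub : ∀ T, X T ⊆ W := fun T => Finset.filter_subset _ _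
  -- disjointness
  have hXdisj : ∀ T₁ T₂, Disjoint T₁ T₂ → Disjoint (X T₁) (X T₂) := by
    intro T₁ T₂ hT
    rw [Finset.disjoint_left]
    intro v hv1 hv2
    have hvW : v ∈ (↑W : Set V) := hXsub _ hv1
    exact (Finset.disjoint_left.mp hT) ((hmemX T₁ v hvW).mp hv1) ((hmemX T₂ v hvW).mp hv2)
  have hXunion : ∀ T₁ T₂, X T₁ ∪ X T₂ = X (T₁ ∪ T₂) := by
    intro T₁ T₂
    ext v
    constructor
    · intro hv
      rcases Finset.mem_union.mp hv with hv | hv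
      · have hvW : v ∈ (↑W : Set V) := hXsub _ hv
        exact (hmemX _ v hvW).mpr (Finset.mem_union_left _ ((hmemX _ v hvW).mp hv))
      · have hvW : v ∈ (↑W : Set V) := hXsub _ hv
        exact (hmemX _ v hvW).mpr (Finset.mem_union_right _ ((hmemX _ v hvW).mp hv))
    · intro hv
      have hvW : v ∈ (↑W : Set V) := hXsub _ hv
      rcases Finset.mem_union.mp ((hmemX _ v hvW).mp hv) with hk | hk
      · exact Finset.mem_union_left _ ((hmemX _ v hvW).mpr hk)
      · exact Finset.mem_union_right _ ((hmemX _ v hvW).mpr hk)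
  have hXuniv : X Finset.univ = W := by
    apply Finset.Subset.antisymm (hXsub _)
    intro v hv
    exact (hmemX _ v hv).mpr (Finset.mem_univ _)
  have hcardadd : ∀ T₁ T₂, Disjoint T₁ T₂ →
      (X (T₁ ∪ T₂)).card = (X T₁).card + (X T₂).card := by
    intro T₁ T₂ hT
    rw [← hXunion, Finset.card_union_of_disjoint (hXdisj _ _ hT)]
  -- each set of components has at least as many vertices
  have hcard4 : ∀ T : Finset G'.ConnectedComponent, T.card ≤ (X T).card := by
    intro T
    apply Finset.card_le_card_of_injOn (fun c => (c.out : V))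
    · intro c hc
      refine (hmemX T _ c.out.2).mpr ?_
      have h1 : (⟨(c.out : V), c.out.2⟩ : (↑W : Set V)) = c.out := rfl
      rw [h1]
      show Quot.mk G'.Reachable (Quot.out c) ∈ T
      exact (congrArg (· ∈ T) (Quot.out_eq c)).mpr hc
    · intro c₁ h₁ c₂ h₂ heq
      have h2 : (c₁.out : (↑W : Set V)) = c₂.out := Subtype.ext heq
      rw [← Quot.out_eq c₁, ← Quot.out_eq c₂, h2]
  -- the whole vertex set is big enough
  have hPuniv : S.card ≤ 3 * (X Finset.univ).card := by
    have h1 : Fintype.card G'.ConnectedComponent ≤ (X Finset.univ).card := by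
      simpa using hcard4 Finset.univ
    omega
  obtain ⟨T₀, hT₀mem, hT₀min⟩ := Finset.exists_min_image
    (Finset.univ.filter (fun T => S.card ≤ 3 * (X T).card)) (fun T => (X T).card)
    ⟨Finset.univ, by simp [hPuniv]⟩
  rw [Finset.mem_filter] at hT₀mem
  have hT₀P : S.card ≤ 3 * (X T₀).card := hT₀mem.2
  have hT₀ne : T₀.Nonempty := by
    rcases Finset.eq_empty_or_nonempty T₀ with rfl | hne
    · exfalso
      have hX0 : (X ∅).card = 0 := by simp [hXdef]
      omega
    · exact hne
  obtain ⟨t, ht⟩ := hT₀ne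
  have hsplitT₀ : (X T₀).card = (X (T₀.erase t)).card + (X {t}).card := by
    have hd : Disjoint (T₀.erase t) {t} := by
      simp [Finset.disjoint_singleton_right]
    have hu : T₀.erase t ∪ {t} = T₀ := by
      rw [Finset.union_comm, ← Finset.insert_eq, Finset.insert_erase ht]
    have h3 := hcardadd _ _ hd
    rw [hu] at h3
    exact h3
  have h1t : 1 ≤ (X {t}).card := by simpa using hcard4 {t}
  have heraseP : 3 * (X (T₀.erase t)).card < S.card := by
    by_contra hP
    push_neg at hP
    have hmin := hT₀min (T₀.erase t) (by simp [hP])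
    omega
  have hsplit2 : (X ({t}ᶜ)).card = (X (T₀.erase t)).card + (X T₀ᶜ).card := by
    have hd : Disjoint (T₀.erase t) T₀ᶜ :=
      disjoint_compl_right.mono_left
        (Finset.le_iff_subset.mpr (Finset.erase_subset _ _))
    have hu : T₀.erase t ∪ T₀ᶜ = ({t}ᶜ : Finset _) := by
      ext c
      simp only [Finset.mem_union, Finset.mem_erase, Finset.mem_compl,
        Finset.mem_singleton]
      constructor
      · rintro (⟨h1, -⟩ | h1)
        · exact h1
        · rintro rfl; exact h1 ht
      · intro h1
        by_cases h2 : c ∈ T₀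
        · exact Or.inl ⟨h1, h2⟩
        · exact Or.inr h2
    have h3 := hcardadd _ _ hd
    rw [hu] at h3
    exact h3
  have hcompl1 : S.card ≤ (X ({t}ᶜ)).card := by
    have h1 : ({t}ᶜ : Finset G'.ConnectedComponent).card =
        Fintype.card G'.ConnectedComponent - 1 := by
      simp [Finset.card_compl]
    have h2 := hcard4 ({t}ᶜ : Finset G'.ConnectedComponent)
    omega
  have hfinal : S.card ≤ 3 * (X T₀ᶜ).card := by omega
  obtain ⟨x, hx, y, hy, hadj⟩ := h (X T₀) (X T₀ᶜ)
    (by rw [hXunion, Finset.union_compl, hXuniv])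
    (hXdisj _ _ disjoint_compl_right)
    (hbound _ hT₀P) (hbound _ hfinal)
  have hxW : x ∈ (↑W : Set V) := hXsub _ hx
  have hyW : y ∈ (↑W : Set V) := hXsub _ hy
  have hadj' : G'.Adj ⟨x, hxW⟩ ⟨y, hyW⟩ := hadj
  have hsame : G'.connectedComponentMk ⟨x, hxW⟩ = G'.connectedComponentMk ⟨y, hyW⟩ :=
    ConnectedComponent.sound hadj'.reachable
  have hxT := (hmemX T₀ x hxW).mp hx
  have hyT := (hmemX T₀ᶜ y hyW).mp hy
  rw [hsame] at hxT
  exact (Finset.mem_compl.mp hyT) hxT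
end
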